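/- arXiv:2006.06757 — 4 statements merged into one kernel-verified Lean document; each statement's English description precedes it below -/
import Mathlib

section
/- Let R be a ring which has only finitely many simple right R-modules up to isomorphism, and let M be a distributive right R-module. Then M is finite-dimensional, i.e., M does not contain an infinite direct sum of nonzero submodules. -/
/-- A module is *distributive* if its lattice of submodules is distributive, i.e.
`X ⊓ (Y ⊔ Z) = (X ⊓ Y) ⊔ (X ⊓ Z)` for all submodules `X, Y, Z`. -/
def IsDistribModule (R M : Type*) [Ring R] [AddCommGroup M] [Module R M] : Prop :=
  ∀ X Y Z : Submodule R M, X ⊓ (Y ⊔ Z) = X ⊓ Y ⊔ X ⊓ Z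

/-- A module is *finite-dimensional* (in the sense of Goldie/uniform dimension) if it
does not contain an infinite direct sum of nonzero submodules, i.e. every independent
family of nonzero submodules is finite. -/
def IsFinDimModule (R M : Type*) [Ring R] [AddCommGroup M] [Module R M] : Prop :=
  ∀ (ι : Type) (N : ι → Submodule R M), iSupIndep N → (∀ i, N i ≠ ⊥) → Finite ι

/-- A ring `R` has only finitely many simple right `R`-modules up to isomorphism:
since every simple right module is isomorphic to a quotient of `R` (as a right module,
i.e. as an `Rᵐᵒᵖ`-module), this says that there is a finite set of right ideals such that
every simple quotient of `R` is isomorphic to a quotient by one of them. -/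
def HasFinitelyManySimpleRightModules (R : Type*) [Ring R] : Prop :=
  ∃ s : Finset (Submodule Rᵐᵒᵖ R),
    ∀ I : Submodule Rᵐᵒᵖ R, IsSimpleModule Rᵐᵒᵖ (R ⧸ I) →
      ∃ J ∈ s, Nonempty ((R ⧸ I) ≃ₗ[Rᵐᵒᵖ] (R ⧸ J))

open MulOpposite LinearMap Submodule

section Aux

variable {R : Type*} [Ring R] {M : Type*} [AddCommGroup M] [Module Rᵐᵒᵖ M]

/-- Right multiplication into `x`: the `Rᵐᵒᵖ`-linear map `R → M`, `r ↦ op r • x`. -/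
def rmulAux (x : M) : R →ₗ[Rᵐᵒᵖ] M where
  toFun r := op r • x
  map_add' a b := by show op (a + b) • x = op a • x + op b • x; rw [op_add, add_smul]
  map_smul' a b := by
    simp only [RingHom.id_apply]
    show op (a • b) • x = a • op b • x
    have : op (a • b) = a * op b := by
      rw [MulOpposite.smul_eq_mul_unop, op_mul, op_unop]
    rw [this, mul_smul]

@[simp] lemma rmulAux_apply (x : M) (r : R) : rmulAux x r = op r • x := rfl

lemma range_rmulAux (x : M) : LinearMap.range (rmulAux (R := R) x) = span Rᵐᵒᵖ {x} := by
  ext y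
  simp only [LinearMap.mem_range, Submodule.mem_span_singleton, rmulAux_apply]
  constructor
  · rintro ⟨r, rfl⟩; exact ⟨op r, rfl⟩
  · rintro ⟨a, rfl⟩; exact ⟨unop a, by rw [op_unop]⟩

end Aux

section General

variable {S : Type*} [Ring S] {M : Type*} [AddCommGroup M] [Module S M]

/-- In a distributive module, two independent isomorphic submodules are trivial. -/
theorem sqfree_aux (hM : IsDistribModule S M) (A B : Submodule S M) (hAB : A ⊓ B = ⊥)
    (f : A ≃ₗ[S] B) : A = ⊥ := by
  set g : A →ₗ[S] M := A.subtype + B.subtype.comp f.toLinearMap with hg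
  have hgapp : ∀ a : A, g a = (a : M) + (f a : M) := fun a => rfl
  set D := LinearMap.range g with hD
  have hle : D ≤ A ⊔ B := by
    rintro _ ⟨a, rfl⟩
    exact add_mem_sup a.2 (f a).2
  have hfB : ∀ a : A, (f a : M) ∈ B := fun a => (f a).2
  have hDA : D ⊓ A = ⊥ := by
    rw [eq_bot_iff]
    rintro z ⟨⟨a, rfl⟩, hzA⟩
    have hfa : (f a : M) ∈ A ⊓ B := by
      refine ⟨?_, hfB a⟩
      have : (f a : M) = g a - (a : M) := by rw [hgapp]; abel
      rw [this]; exact sub_mem hzA a.2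
    rw [hAB] at hfa
    have : f a = 0 := Subtype.ext hfa
    have ha : a = 0 := f.injective (by rw [this, map_zero])
    simp [hgapp, ha]
  have hDB : D ⊓ B = ⊥ := by
    rw [eq_bot_iff]
    rintro z ⟨⟨a, rfl⟩, hzB⟩
    have haAB : (a : M) ∈ A ⊓ B := by
      refine ⟨a.2, ?_⟩
      have : (a : M) = g a - (f a : M) := by rw [hgapp]; abel
      rw [this]; exact sub_mem hzB (hfB a)
    rw [hAB] at haAB
    have ha : a = 0 := Subtype.ext haAB
    simp [hgapp, ha]
  have hDbot : D = ⊥ := by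
    have h := hM D A B
    rw [inf_eq_left.mpr hle, hDA, hDB, sup_idem] at h
    exact h
  rw [eq_bot_iff]
  intro a ha
  have hga : g ⟨a, ha⟩ ∈ D := ⟨⟨a, ha⟩, rfl⟩
  rw [hDbot, Submodule.mem_bot] at hga
  have : (a : M) ∈ A ⊓ B := by
    refine ⟨ha, ?_⟩
    have : a = -(f ⟨a, ha⟩ : M) := by
      have h := hgapp ⟨a, ha⟩
      rw [hga] at h
      exact eq_neg_of_add_eq_zero_left h.symm
    rw [this]; exact neg_mem (hfB _)
  rw [hAB] at this
  exact this

/-- Quotients of distributive modules are distributive. -/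
theorem IsDistribModule.quotient (hM : IsDistribModule S M) (K : Submodule S M) :
    IsDistribModule S (M ⧸ K) := by
  intro X Y Z
  have hs := K.mkQ_surjective
  have key : ∀ P Q : Submodule S (M ⧸ K),
      comap K.mkQ (P ⊔ Q) = comap K.mkQ P ⊔ comap K.mkQ Q := by
    intro P Q
    refine le_antisymm ?_ (sup_le (comap_mono le_sup_left) (comap_mono le_sup_right))
    intro w hw
    rw [Submodule.mem_comap] at hw
    obtain ⟨p, hp, q, hq, hpq⟩ := mem_sup.mp hw
    obtain ⟨a, rfl⟩ := hs p
    obtain ⟨b, rfl⟩ := hs q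
    have hker : w - a - b ∈ K := by
      rw [← Submodule.Quotient.mk_eq_zero]
      show K.mkQ (w - a - b) = 0
      rw [map_sub, map_sub, ← hpq]; abel
    refine mem_sup.mpr ⟨a + (w - a - b), ?_, b, hq, by abel⟩
    show K.mkQ (a + (w - a - b)) ∈ P
    have h0 : K.mkQ (w - a - b) = 0 := by
      rw [Submodule.mkQ_apply, Submodule.Quotient.mk_eq_zero]; exact hker
    rw [map_add, h0, add_zero]; exact hp
  apply comap_injective_of_surjective hs
  rw [comap_inf, key, key, comap_inf, comap_inf, hM]

end General

section Key

variable {R : Type*} [Ring R] {M : Type*} [AddCommGroup M] [Module Rᵐᵒᵖ M]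

/-- Annihilators of elements generating independent cyclic submodules of a distributive
module are comaximal right ideals. -/
theorem ker_sup_ker_eq_top (hM : IsDistribModule Rᵐᵒᵖ M) {x y : M}
    (hxy : span Rᵐᵒᵖ {x} ⊓ span Rᵐᵒᵖ {y} = ⊥) :
    LinearMap.ker (rmulAux (R := R) x) ⊔ LinearMap.ker (rmulAux (R := R) y) = ⊤ := by
  have hd := hM (span Rᵐᵒᵖ {x + y}) (span Rᵐᵒᵖ {x}) (span Rᵐᵒᵖ {y})
  have hz : x + y ∈ span Rᵐᵒᵖ {x + y} ⊓ (span Rᵐᵒᵖ {x} ⊔ span Rᵐᵒᵖ {y}) :=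
    ⟨mem_span_singleton_self _, add_mem_sup (mem_span_singleton_self x) (mem_span_singleton_self y)⟩
  rw [hd] at hz
  obtain ⟨u, hu, v, hv, huv⟩ := mem_sup.mp hz
  obtain ⟨a, ha⟩ := mem_span_singleton.mp hu.1
  obtain ⟨b, hb⟩ := mem_span_singleton.mp hv.1
  -- a • y = 0
  have hay : a • y = 0 := by
    have h1 : a • y ∈ span Rᵐᵒᵖ {x} ⊓ span Rᵐᵒᵖ {y} := by
      constructor
      · have : a • y = u - a • x := by rw [← ha, smul_add]; abel
        rw [this]
        exact sub_mem hu.2 (smul_mem _ _ (mem_span_singleton_self x))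
      · exact smul_mem _ _ (mem_span_singleton_self y)
    rw [hxy, Submodule.mem_bot] at h1; exact h1
  have hbx : b • x = 0 := by
    have h1 : b • x ∈ span Rᵐᵒᵖ {x} ⊓ span Rᵐᵒᵖ {y} := by
      constructor
      · exact smul_mem _ _ (mem_span_singleton_self x)
      · have : b • x = v - b • y := by rw [← hb, smul_add]; abel
        rw [this]
        exact sub_mem hv.2 (smul_mem _ _ (mem_span_singleton_self y))
    rw [hxy, Submodule.mem_bot] at h1; exact h1
  set c : Rᵐᵒᵖ := 1 - a - b with hc
  have hcxy : c • (x + y) = 0 := by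
    rw [hc, sub_smul, sub_smul, one_smul, ha, hb, ← huv]; abel
  have hcx : c • x = 0 ∧ c • y = 0 := by
    have h1 : c • x ∈ span Rᵐᵒᵖ {x} ⊓ span Rᵐᵒᵖ {y} := by
      constructor
      · exact smul_mem _ _ (mem_span_singleton_self x)
      · have : c • x = -(c • y) := by
          have := hcxy; rw [smul_add] at this
          exact eq_neg_of_add_eq_zero_left this
        rw [this]
        exact neg_mem (smul_mem _ _ (mem_span_singleton_self y))
    rw [hxy, Submodule.mem_bot] at h1
    refine ⟨h1, ?_⟩
    have := hcxy; rw [smul_add, h1, zero_add] at this; exact this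
  -- 1 = unop b + unop (a + c), with b killing x and (a+c) killing y
  have hbk : unop b ∈ LinearMap.ker (rmulAux (R := R) x) := by
    rw [LinearMap.mem_ker, rmulAux_apply, op_unop]; exact hbx
  have hack : unop (a + c) ∈ LinearMap.ker (rmulAux (R := R) y) := by
    rw [LinearMap.mem_ker, rmulAux_apply, op_unop, add_smul, hay, hcx.2, add_zero]
  have h1 : (1 : R) ∈ LinearMap.ker (rmulAux (R := R) x) ⊔ LinearMap.ker (rmulAux (R := R) y) := by
    have : (1 : R) = unop b + unop (a + c) := by
      have : b + (a + c) = 1 := by rw [hc]; abel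
      rw [← unop_one, ← this, unop_add]
    rw [this]
    exact add_mem_sup hbk hack
  rw [eq_top_iff']
  intro r
  have : (r : R) = op r • (1 : R) := by rw [op_smul_eq_mul, one_mul]
  rw [this]
  exact smul_mem _ _ h1

end Key

section Key2

variable {R : Type*} [Ring R] {M : Type*} [AddCommGroup M] [Module Rᵐᵒᵖ M]

theorem ker_mkQ_rmul (x y : M) (m n : Submodule Rᵐᵒᵖ R)
    (hxy : span Rᵐᵒᵖ {x} ⊓ span Rᵐᵒᵖ {y} = ⊥)
    (hker : LinearMap.ker (rmulAux (R := R) x) ≤ m) :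
    LinearMap.ker ((Submodule.map (rmulAux (R := R) x) m
        ⊔ Submodule.map (rmulAux (R := R) y) n).mkQ ∘ₗ rmulAux (R := R) x) = m := by
  set K := Submodule.map (rmulAux (R := R) x) m ⊔ Submodule.map (rmulAux (R := R) y) n with hK
  ext a
  rw [LinearMap.mem_ker, LinearMap.comp_apply, Submodule.mkQ_apply,
    Submodule.Quotient.mk_eq_zero]
  constructor
  · intro haK
    obtain ⟨u, hu, v, hv, huv⟩ := mem_sup.mp haK
    obtain ⟨cu, hcu, rfl⟩ := hu
    obtain ⟨cv, hcv, rfl⟩ := hv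
    have h1 : rmulAux (R := R) y cv ∈ span Rᵐᵒᵖ {x} ⊓ span Rᵐᵒᵖ {y} := by
      constructor
      · have : rmulAux (R := R) y cv = rmulAux (R := R) x a - rmulAux (R := R) x cu := by
          rw [← huv]; abel
        rw [this, ← map_sub]
        rw [← range_rmulAux x]; exact LinearMap.mem_range_self _ _
      · rw [← range_rmulAux y]; exact LinearMap.mem_range_self _ _
    rw [hxy, Submodule.mem_bot] at h1
    have h2 : a - cu ∈ LinearMap.ker (rmulAux (R := R) x) := by
      rw [LinearMap.mem_ker, map_sub]
      rw [h1, add_zero] at huv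
      rw [huv]; abel
    have := hker h2
    have : a = (a - cu) + cu := by abel
    rw [this]
    exact add_mem (hker h2) hcu
  · intro ham
    exact Submodule.mem_sup_left (Submodule.mem_map_of_mem ham)

theorem range_inf_range_eq_bot (x y : M) (m n : Submodule Rᵐᵒᵖ R)
    (hxy : span Rᵐᵒᵖ {x} ⊓ span Rᵐᵒᵖ {y} = ⊥) :
    LinearMap.range ((Submodule.map (rmulAux (R := R) x) m
        ⊔ Submodule.map (rmulAux (R := R) y) n).mkQ ∘ₗ rmulAux (R := R) x)
      ⊓ LinearMap.range ((Submodule.map (rmulAux (R := R) x) m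
        ⊔ Submodule.map (rmulAux (R := R) y) n).mkQ ∘ₗ rmulAux (R := R) y) = ⊥ := by
  set K := Submodule.map (rmulAux (R := R) x) m ⊔ Submodule.map (rmulAux (R := R) y) n with hK
  rw [eq_bot_iff]
  rintro z ⟨⟨a, rfl⟩, ⟨b, hb⟩⟩
  rw [Submodule.mem_bot]
  simp only [LinearMap.comp_apply, Submodule.mkQ_apply] at hb ⊢
  have hdiff : rmulAux (R := R) y b - rmulAux (R := R) x a ∈ K := by
    rw [← Submodule.Quotient.mk_eq_zero, ← Submodule.mkQ_apply, map_sub]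
    rw [show K.mkQ (rmulAux (R := R) y b) = K.mkQ (rmulAux (R := R) x a) by
      simpa [Submodule.mkQ_apply] using hb]
    abel
  obtain ⟨u, hu, v, hv, huv⟩ := mem_sup.mp hdiff
  obtain ⟨cu, hcu, rfl⟩ := hu
  obtain ⟨cv, hcv, rfl⟩ := hv
  -- rmulAux x a + rmulAux x cu = rmulAux y b - rmulAux y cv ∈ span x ⊓ span y = ⊥
  have h1 : rmulAux (R := R) x a + rmulAux (R := R) x cu ∈ span Rᵐᵒᵖ {x} ⊓ span Rᵐᵒᵖ {y} := by
    constructor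
    · rw [← map_add]
      rw [← range_rmulAux x]; exact LinearMap.mem_range_self _ _
    · have : rmulAux (R := R) x a + rmulAux (R := R) x cu
          = rmulAux (R := R) y b - rmulAux (R := R) y cv := by
        rw [← sub_eq_iff_eq_add'.mpr huv.symm]; abel
      rw [this, ← map_sub]
      rw [← range_rmulAux y]; exact LinearMap.mem_range_self _ _
  rw [hxy, Submodule.mem_bot] at h1
  have hxa : rmulAux (R := R) x a = -(rmulAux (R := R) x cu) := eq_neg_of_add_eq_zero_left h1
  have : rmulAux (R := R) x a ∈ K := by
    rw [hxa]
    exact neg_mem (Submodule.mem_sup_left (Submodule.mem_map_of_mem hcu))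
  rwa [Submodule.Quotient.mk_eq_zero]

end Key2

section Main

theorem top_fg_op (R : Type*) [Ring R] : (⊤ : Submodule Rᵐᵒᵖ R).FG := by
  refine ⟨{1}, ?_⟩
  rw [Finset.coe_singleton, eq_top_iff']
  intro r
  exact mem_span_singleton.mpr ⟨op r, by rw [op_smul_eq_mul, one_mul]⟩

theorem stmt3' (R : Type*) [Ring R]
    (hfin : ∃ s : Finset (Submodule Rᵐᵒᵖ R),
      ∀ I : Submodule Rᵐᵒᵖ R, IsSimpleModule Rᵐᵒᵖ (R ⧸ I) →
        ∃ J ∈ s, Nonempty ((R ⧸ I) ≃ₗ[Rᵐᵒᵖ] (R ⧸ J)))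
    (M : Type*) [AddCommGroup M] [Module Rᵐᵒᵖ M] (hM : IsDistribModule Rᵐᵒᵖ M)
    (ι : Type) (N : ι → Submodule Rᵐᵒᵖ M) (hind : iSupIndep N) (hne : ∀ i, N i ≠ ⊥) :
    Finite ι := by
  by_contra hfinι
  rw [not_finite_iff_infinite] at hfinι
  obtain ⟨s, hs⟩ := hfin
  choose x hxN hx0 using fun i => (N i).ne_bot_iff.mp (hne i)
  have hdisj : ∀ i j, i ≠ j → span Rᵐᵒᵖ {x i} ⊓ span Rᵐᵒᵖ {x j} = ⊥ := by
    intro i j hij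
    have hd : Disjoint (N i) (N j) := hind.pairwiseDisjoint hij
    exact disjoint_iff.mp (hd.mono (span_le.mpr (Set.singleton_subset_iff.mpr (hxN i)))
      (span_le.mpr (Set.singleton_subset_iff.mpr (hxN j))))
  have hker_ne : ∀ i, LinearMap.ker (rmulAux (R := R) (x i)) ≠ ⊤ := by
    intro i h
    apply hx0 i
    have h1 : (1 : R) ∈ LinearMap.ker (rmulAux (R := R) (x i)) := h.symm ▸ trivial
    rw [LinearMap.mem_ker, rmulAux_apply, op_one, one_smul] at h1
    exact h1
  haveI hco : IsCoatomic (Submodule Rᵐᵒᵖ R) :=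
    CompleteLattice.coatomic_of_top_compact ((Submodule.fg_iff_compact _).mp (top_fg_op R))
  have hexm : ∀ i, ∃ m : Submodule Rᵐᵒᵖ R,
      IsCoatom m ∧ LinearMap.ker (rmulAux (R := R) (x i)) ≤ m := by
    intro i
    rcases eq_top_or_exists_le_coatom (LinearMap.ker (rmulAux (R := R) (x i))) with h | ⟨m, hm, hle⟩
    · exact absurd h (hker_ne i)
    · exact ⟨m, hm, hle⟩
  choose m hmco hmle using hexm
  have hsimple : ∀ i, IsSimpleModule Rᵐᵒᵖ (R ⧸ m i) := fun i =>
    isSimpleModule_iff_isCoatom.mpr (hmco i)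
  choose J hJs hJiso using fun i => hs (m i) (hsimple i)
  obtain ⟨i, j, hij, hJeq⟩ := Finite.exists_ne_map_eq_of_infinite
    (fun i => (⟨J i, hJs i⟩ : {y // y ∈ s}))
  have hJJ : J i = J j := congrArg Subtype.val hJeq
  obtain ⟨e₁⟩ := hJiso i
  obtain ⟨e₂⟩ := hJiso j
  rw [hJJ] at e₁
  have φ : (R ⧸ m i) ≃ₗ[Rᵐᵒᵖ] (R ⧸ m j) := e₁.trans e₂.symm
  set K := Submodule.map (rmulAux (R := R) (x i)) (m i)
      ⊔ Submodule.map (rmulAux (R := R) (x j)) (m j) with hKdef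
  set gx := K.mkQ ∘ₗ rmulAux (R := R) (x i) with hgx
  set gy := K.mkQ ∘ₗ rmulAux (R := R) (x j) with hgy
  have hkx : LinearMap.ker gx = m i :=
    ker_mkQ_rmul (x i) (x j) (m i) (m j) (hdisj i j hij) (hmle i)
  have hky : LinearMap.ker gy = m j := by
    have h := ker_mkQ_rmul (x j) (x i) (m j) (m i) (hdisj j i (Ne.symm hij)) (hmle j)
    rwa [sup_comm] at h
  have eA : (R ⧸ m i) ≃ₗ[Rᵐᵒᵖ] LinearMap.range gx :=
    (Submodule.quotEquivOfEq _ _ hkx.symm).trans gx.quotKerEquivRange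
  have eB : (R ⧸ m j) ≃ₗ[Rᵐᵒᵖ] LinearMap.range gy :=
    (Submodule.quotEquivOfEq _ _ hky.symm).trans gy.quotKerEquivRange
  have f : (LinearMap.range gx) ≃ₗ[Rᵐᵒᵖ] (LinearMap.range gy) := eA.symm.trans (φ.trans eB)
  have hbot : LinearMap.range gx = ⊥ :=
    sqfree_aux (hM.quotient K) _ _
      (range_inf_range_eq_bot (x i) (x j) (m i) (m j) (hdisj i j hij)) f
  haveI : Nontrivial (R ⧸ m i) := Submodule.Quotient.nontrivial_iff.mpr (hmco i).1
  obtain ⟨a, b, hab⟩ := exists_pair_ne (R ⧸ m i)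
  apply hab
  apply eA.injective
  haveI : Subsingleton ↥(LinearMap.range gx) := by rw [hbot]; infer_instance
  exact Subsingleton.elim _ _

end Main


/-- If `R` has only finitely many simple right `R`-modules up to isomorphism and `M` is a
distributive right `R`-module, then `M` is finite-dimensional. -/
theorem stmt3 (R : Type*) [Ring R] (hfin : HasFinitelyManySimpleRightModules R)
    (M : Type*) [AddCommGroup M] [Module Rᵐᵒᵖ M] (hM : IsDistribModule Rᵐᵒᵖ M) :
    IsFinDimModule Rᵐᵒᵖ M := fun ι N hind hne => stmt3' R hfin M hM ι N hind hne
end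

section
/- Let R be a right semidistributive ring which has only finitely many simple right R-modules up to isomorphism. Then every cyclic right R-module is quotient finite-dimensional. -/
/-- A module is *quotient finite-dimensional* if every quotient module of it is
finite-dimensional. -/
def IsQFDModule (R M : Type*) [Ring R] [AddCommGroup M] [Module R M] : Prop :=
  ∀ N : Submodule R M, IsFinDimModule R (M ⧸ N)

/-- A ring `A` is *right semidistributive* if, as a right module over itself
(i.e. as an `Aᵐᵒᵖ`-module), it is a direct sum of distributive submodules. -/
def IsRightSemidistributiveRing (A : Type*) [Ring A] : Prop :=
  ∃ (ι : Type) (N : ι → Submodule Aᵐᵒᵖ A),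
    iSupIndep N ∧ iSup N = ⊤ ∧ ∀ i, IsDistribModule Aᵐᵒᵖ (N i)


section Distrib


variable {A : Type*} [Ring A]

theorem isDistrib_of_surjective {M N : Type*} [AddCommGroup M] [Module A M]
    [AddCommGroup N] [Module A N] (g : M →ₗ[A] N) (hg : Function.Surjective g)
    (hM : IsDistribModule A M) : IsDistribModule A N := by
  have hsup : ∀ Y Z : Submodule A N,
      Submodule.comap g (Y ⊔ Z) = Submodule.comap g Y ⊔ Submodule.comap g Z := by
    intro Y Z
    have h1 : Submodule.map g (Submodule.comap g Y ⊔ Submodule.comap g Z) = Y ⊔ Z := by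
      rw [Submodule.map_sup, Submodule.map_comap_eq_of_surjective hg,
        Submodule.map_comap_eq_of_surjective hg]
    have hker : LinearMap.ker g ≤ Submodule.comap g Y ⊔ Submodule.comap g Z := by
      refine le_trans ?_ le_sup_left
      intro x hx
      simp only [Submodule.mem_comap, LinearMap.mem_ker.mp hx, Submodule.zero_mem]
    calc Submodule.comap g (Y ⊔ Z)
        = Submodule.comap g (Submodule.map g (Submodule.comap g Y ⊔ Submodule.comap g Z)) := by
          rw [h1]
      _ = (Submodule.comap g Y ⊔ Submodule.comap g Z) ⊔ LinearMap.ker g :=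
          Submodule.comap_map_eq g _
      _ = _ := sup_eq_left.mpr hker
  intro X Y Z
  apply Submodule.comap_injective_of_surjective hg
  rw [Submodule.comap_inf, hsup, hsup, Submodule.comap_inf, Submodule.comap_inf, hM]

theorem isDistrib_of_equiv {M N : Type*} [AddCommGroup M] [Module A M]
    [AddCommGroup N] [Module A N] (e : M ≃ₗ[A] N)
    (hM : IsDistribModule A M) : IsDistribModule A N :=
  isDistrib_of_surjective e.toLinearMap e.surjective hM

theorem isDistrib_submodule {M : Type*} [AddCommGroup M] [Module A M]
    (hM : IsDistribModule A M) (P : Submodule A M) : IsDistribModule A ↥P := by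
  intro X Y Z
  apply Submodule.map_injective_of_injective (f := P.subtype) P.injective_subtype
  rw [Submodule.map_inf _ P.injective_subtype, Submodule.map_sup, Submodule.map_sup,
    Submodule.map_inf _ P.injective_subtype, Submodule.map_inf _ P.injective_subtype, hM]

/-- image of a distributive submodule under a linear map is distributive -/
theorem isDistrib_map {M N : Type*} [AddCommGroup M] [Module A M]
    [AddCommGroup N] [Module A N] (g : M →ₗ[A] N) (P : Submodule A M)
    (hP : IsDistribModule A ↥P) : IsDistribModule A ↥(P.map g) := by
  refine isDistrib_of_surjective
    (LinearMap.codRestrict (P.map g) (g.comp P.subtype) fun x => ?_) ?_ hP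
  · exact Submodule.mem_map_of_mem x.2
  · rintro ⟨y, hy⟩
    obtain ⟨x, hx, rfl⟩ := hy
    exact ⟨⟨x, hx⟩, rfl⟩

/-- no two disjoint isomorphic nonzero submodules in a distributive module -/
theorem eq_bot_of_disjoint_equiv {M : Type*} [AddCommGroup M] [Module A M]
    (hM : IsDistribModule A M) (T₁ T₂ : Submodule A M) (hdisj : T₁ ⊓ T₂ = ⊥)
    (σ : ↥T₁ ≃ₗ[A] ↥T₂) : T₁ = ⊥ := by
  by_contra hne
  obtain ⟨x, hx, hx0⟩ := Submodule.exists_mem_ne_zero_of_ne_bot hne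
  set δ : ↥T₁ →ₗ[A] M := T₁.subtype + T₂.subtype ∘ₗ σ.toLinearMap with hδ
  set Δ : Submodule A M := LinearMap.range δ with hΔ
  have hmem : ∀ t : ↥T₁, δ t = (t : M) + (σ t : M) := fun t => rfl
  have h1 : Δ ⊓ T₁ = ⊥ := by
    refine eq_bot_iff.mpr ?_
    rintro y ⟨⟨t, rfl⟩, hy1⟩
    have h2 : (σ t : M) ∈ T₁ ⊓ T₂ := by
      constructor
      · have : (σ t : M) = δ t - (t : M) := by rw [hmem]; abel
        rw [this]
        exact sub_mem hy1 t.2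
      · exact (σ t).2
    rw [hdisj] at h2
    have : σ t = 0 := Subtype.ext h2
    have ht : t = 0 := by simpa using σ.injective (by simp [this])
    simp [hmem, ht]
  have h2 : Δ ⊓ T₂ = ⊥ := by
    refine eq_bot_iff.mpr ?_
    rintro y ⟨⟨t, rfl⟩, hy2⟩
    have h3 : (t : M) ∈ T₁ ⊓ T₂ := by
      refine ⟨t.2, ?_⟩
      have : (t : M) = δ t - (σ t : M) := by rw [hmem]; abel
      rw [this]
      exact sub_mem hy2 (σ t).2
    rw [hdisj] at h3
    have ht : t = 0 := Subtype.ext h3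
    simp [hmem, ht]
  have h3 : Δ ≤ T₁ ⊔ T₂ := by
    rintro y ⟨t, rfl⟩
    rw [hmem]
    exact Submodule.add_mem_sup t.2 (σ t).2
  have h4 : Δ ≠ ⊥ := by
    intro hbot
    have : δ ⟨x, hx⟩ = 0 := by
      have : δ ⟨x, hx⟩ ∈ Δ := LinearMap.mem_range_self δ _
      rw [hbot] at this
      simpa using this
    rw [hmem] at this
    have hxT : (x : M) ∈ T₁ ⊓ T₂ := by
      refine ⟨hx, ?_⟩
      have hx2 : x = -(σ ⟨x, hx⟩ : M) := by
        have h5 := eq_neg_of_add_eq_zero_left this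
        simpa using h5
      rw [hx2]
      exact neg_mem (σ _).2
    rw [hdisj] at hxT
    exact hx0 hxT
  have := hM Δ T₁ T₂
  rw [inf_eq_left.mpr h3, h1, h2, sup_bot_eq] at this
  exact h4 this

end Distrib
open Classical in
/-- minimal support element: in a nonzero submodule of a finite power of a simple
module there is an element `c` and a coordinate `i` such that every element of
`span {c}` vanishing at `i` is zero, and `c i ≠ 0`. -/
theorem exists_minimal_support {A S κ : Type*} [Ring A] [AddCommGroup S] [Module A S]
    [Fintype κ] (U : Submodule A (κ → S)) (hU : U ≠ ⊥) :
    ∃ c ∈ U, ∃ i : κ, c i ≠ 0 ∧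
      ∀ x ∈ Submodule.span A ({c} : Set (κ → S)), x i = 0 → x = 0 := by
  classical
  set sc : (κ → S) → ℕ := fun v => (Finset.univ.filter (fun j => v j ≠ 0)).card with hsc
  have hex : ∃ m, ∃ c ∈ U, c ≠ 0 ∧ sc c = m := by
    obtain ⟨c, hc, hc0⟩ := Submodule.exists_mem_ne_zero_of_ne_bot hU
    exact ⟨sc c, c, hc, hc0, rfl⟩
  obtain ⟨c, hcU, hc0, hm⟩ := Nat.find_spec hex
  have hmin := fun m (hm' : m < Nat.find hex) => Nat.find_min hex hm'
  have hsupp : (Finset.univ.filter (fun j => c j ≠ 0)).Nonempty := by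
    by_contra h
    apply hc0
    funext j
    by_contra hj
    exact h ⟨j, Finset.mem_filter.mpr ⟨Finset.mem_univ j, hj⟩⟩
  obtain ⟨i, hi⟩ := hsupp
  have hci : c i ≠ 0 := (Finset.mem_filter.mp hi).2
  refine ⟨c, hcU, i, hci, ?_⟩
  intro x hx hxi
  by_contra hx0
  obtain ⟨a, rfl⟩ := Submodule.mem_span_singleton.mp hx
  have hsub : (Finset.univ.filter (fun j => (a • c) j ≠ 0)) ⊆
      (Finset.univ.filter (fun j => c j ≠ 0)) := by
    intro j hj
    rw [Finset.mem_filter] at hj ⊢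
    refine ⟨Finset.mem_univ j, fun h => hj.2 ?_⟩
    simp only [Pi.smul_apply, h, smul_zero]
  have hlt : sc (a • c) < sc c := by
    have hne : i ∉ (Finset.univ.filter (fun j => (a • c) j ≠ 0)) := by
      simpa using hxi
    have : (Finset.univ.filter (fun j => (a • c) j ≠ 0)) ⊂
        (Finset.univ.filter (fun j => c j ≠ 0)) :=
      Finset.ssubset_iff_of_subset hsub |>.mpr ⟨i, hi, hne⟩
    exact Finset.card_lt_card this
  rw [hm] at hlt
  exact hmin _ hlt ⟨a • c, Submodule.smul_mem U a hcU, hx0, rfl⟩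
theorem span_proj_equiv {A S κ : Type*} [Ring A] [AddCommGroup S] [Module A S]
    [IsSimpleModule A S] [Fintype κ] (c : κ → S) (i : κ) (hci : c i ≠ 0)
    (hmin : ∀ x ∈ Submodule.span A ({c} : Set (κ → S)), x i = 0 → x = 0) :
    ∃ e : ↥(Submodule.span A ({c} : Set (κ → S))) ≃ₗ[A] S,
      ∀ x : ↥(Submodule.span A ({c} : Set (κ → S))), e x = (x : κ → S) i := by
  set C := Submodule.span A ({c} : Set (κ → S)) with hC
  have hcC : c ∈ C := Submodule.mem_span_singleton_self c
  set pr : ↥C →ₗ[A] S := (LinearMap.proj i) ∘ₗ C.subtype with hpr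
  have hinj : Function.Injective pr := by
    rw [← LinearMap.ker_eq_bot, eq_bot_iff]
    rintro x hx
    have : (x : κ → S) = 0 := hmin _ x.2 (LinearMap.mem_ker.mp hx)
    exact (Submodule.mem_bot _).mpr (Subtype.ext this)
  have hsurj : Function.Surjective pr := by
    have hne : LinearMap.range pr ≠ ⊥ := by
      intro hbot
      apply hci
      have : pr ⟨c, hcC⟩ ∈ LinearMap.range pr := LinearMap.mem_range_self _ _
      rw [hbot] at this
      simpa [hpr] using this
    rw [← LinearMap.range_eq_top]
    exact (eq_bot_or_eq_top _).resolve_left hne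
  exact ⟨LinearEquiv.ofBijective pr ⟨hinj, hsurj⟩, fun x => rfl⟩

theorem exists_proj_equiv {A S κ : Type*} [Ring A] [AddCommGroup S] [Module A S]
    [IsSimpleModule A S] [Fintype κ] (W : Submodule A (κ → S)) (hW : W ≠ ⊥)
    (hdis : IsDistribModule A ↥W) :
    ∃ (i : κ) (e : ↥W ≃ₗ[A] S), ∀ w : ↥W, e w = (w : κ → S) i := by
  obtain ⟨c, hcW, i, hci, hcmin⟩ := exists_minimal_support W hW
  set prW : ↥W →ₗ[A] S := (LinearMap.proj i) ∘ₗ W.subtype with hprW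
  have hsurj : Function.Surjective prW := by
    have hne : LinearMap.range prW ≠ ⊥ := by
      intro hbot
      apply hci
      have : prW ⟨c, hcW⟩ ∈ LinearMap.range prW := LinearMap.mem_range_self _ _
      rw [hbot] at this
      simpa [hprW] using this
    rw [← LinearMap.range_eq_top]
    exact (eq_bot_or_eq_top _).resolve_left hne
  have hinj : Function.Injective prW := by
    rw [← LinearMap.ker_eq_bot]
    by_contra hker
    set W₁ : Submodule A (κ → S) :=
      W ⊓ LinearMap.ker (LinearMap.proj (R := A) (φ := fun _ : κ => S) i) with hW₁
    have hW₁W : W₁ ≤ W := inf_le_left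
    have hW₁ne : W₁ ≠ ⊥ := by
      intro hbot
      apply hker
      rw [eq_bot_iff]
      rintro w hw
      have hmem : (w : κ → S) ∈ W₁ := ⟨w.2, by simpa [hprW] using LinearMap.mem_ker.mp hw⟩
      rw [hbot] at hmem
      exact (Submodule.mem_bot _).mpr (Subtype.ext hmem)
    obtain ⟨c₂, hc₂W₁, i₂, hc₂i₂, hc₂min⟩ := exists_minimal_support W₁ hW₁ne
    set C : Submodule A (κ → S) := Submodule.span A ({c} : Set (κ → S)) with hC
    set C₂ : Submodule A (κ → S) := Submodule.span A ({c₂} : Set (κ → S)) with hC₂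
    have hCW : C ≤ W := (Submodule.span_singleton_le_iff_mem _ _).mpr hcW
    have hC₂W₁ : C₂ ≤ W₁ := (Submodule.span_singleton_le_iff_mem _ _).mpr hc₂W₁
    have hC₂W : C₂ ≤ W := le_trans hC₂W₁ hW₁W
    obtain ⟨eC, -⟩ := span_proj_equiv c i hci hcmin
    obtain ⟨eC₂, -⟩ := span_proj_equiv c₂ i₂ hc₂i₂ hc₂min
    have hCC₂ : C ⊓ C₂ = ⊥ := by
      rw [eq_bot_iff]
      rintro x ⟨hx1, hx2⟩
      have hxi : x i = 0 := by
        have := (hC₂W₁ hx2).2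
        simpa using this
      exact (Submodule.mem_bot _).mpr (hcmin x hx1 hxi)
    set T₁ := C.comap W.subtype with hT₁
    set T₂ := C₂.comap W.subtype with hT₂
    have hdisj : T₁ ⊓ T₂ = ⊥ := by
      rw [hT₁, hT₂, ← Submodule.comap_inf, hCC₂, Submodule.comap_bot, Submodule.ker_subtype]
    have σ : ↥T₁ ≃ₗ[A] ↥T₂ :=
      (Submodule.comapSubtypeEquivOfLe hCW).trans
        (eC.trans (eC₂.symm.trans (Submodule.comapSubtypeEquivOfLe hC₂W).symm))
    have hbot := eq_bot_of_disjoint_equiv hdis T₁ T₂ hdisj σ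
    apply hci
    have hcT : (⟨c, hcW⟩ : ↥W) ∈ T₁ := by
      simp only [hT₁, Submodule.mem_comap, Submodule.coe_subtype]
      exact Submodule.mem_span_singleton_self c
    rw [hbot] at hcT
    have : c = 0 := congrArg Subtype.val ((Submodule.mem_bot _).mp hcT)
    simp [this]
  exact ⟨i, LinearEquiv.ofBijective prW ⟨hinj, hsurj⟩, fun x => rfl⟩
theorem factor_through_range {A M N T : Type*} [Ring A] [AddCommGroup M] [Module A M]
    [AddCommGroup N] [Module A N] [AddCommGroup T] [Module A T]
    (ρ : M →ₗ[A] N) (g : M →ₗ[A] T) (hg : Function.Surjective g)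
    (hker : LinearMap.ker ρ ≤ LinearMap.ker g) :
    ∃ h : ↥(LinearMap.range ρ) →ₗ[A] T, Function.Surjective h := by
  refine ⟨(Submodule.liftQ _ g hker) ∘ₗ (ρ.quotKerEquivRange).symm.toLinearMap, ?_⟩
  have h1 : Function.Surjective (Submodule.liftQ (LinearMap.ker ρ) g hker) := by
    intro t
    obtain ⟨m, rfl⟩ := hg t
    exact ⟨Submodule.Quotient.mk m, rfl⟩
  exact h1.comp (LinearEquiv.surjective _)

theorem iSupIndep_comap {A Q ι : Type*} [Ring A] [AddCommGroup Q] [Module A Q]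
    {P : ι → Submodule A Q} (hind : iSupIndep P) (V : Submodule A Q) :
    iSupIndep (fun j => (P j).comap V.subtype) := by
  intro j
  rw [disjoint_iff]
  have h1 : (⨆ (k) (_ : k ≠ j), (P k).comap V.subtype) ≤
      ((⨆ (k) (_ : k ≠ j), P k)).comap V.subtype := by
    refine iSup₂_le fun k hk => Submodule.comap_mono ?_
    exact le_iSup₂ (f := fun k (_ : k ≠ j) => P k) k hk
  refine le_antisymm (le_trans (inf_le_inf_left _ h1) ?_) bot_le
  rw [← Submodule.comap_inf, disjoint_iff.mp (hind j), Submodule.comap_bot,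
    Submodule.ker_subtype]

open DirectSum in
/-- A surjection from the sup of a finite independent family given surjections
from the parts. -/
theorem sup_surjection {A Q : Type*} [Ring A] [AddCommGroup Q] [Module A Q]
    {κ : Type*} [Fintype κ] (P : κ → Submodule A Q) (hind : iSupIndep P)
    (T : κ → Type*) [∀ j, AddCommGroup (T j)] [∀ j, Module A (T j)]
    (g : ∀ j, ↥(P j) →ₗ[A] T j) (hg : ∀ j, Function.Surjective (g j)) :
    ∃ f : ↥(⨆ j, P j) →ₗ[A] (∀ j, T j), Function.Surjective f := by
  classical
  set V := ⨆ j, P j with hV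
  have hle : ∀ j, P j ≤ V := fun j => le_iSup P j
  set P' : κ → Submodule A ↥V := fun j => (P j).comap V.subtype with hP'
  have hind' : iSupIndep P' := iSupIndep_comap hind V
  have hsup' : ⨆ j, P' j = ⊤ := by
    apply Submodule.map_injective_of_injective V.injective_subtype
    rw [Submodule.map_iSup, Submodule.map_top, Submodule.range_subtype]
    refine le_antisymm (iSup_le fun j => ?_) ?_
    · rw [hP']
      rw [Submodule.map_comap_subtype]
      exact inf_le_left
    · show (⨆ j, P j) ≤ _
      refine iSup_le fun j => le_trans ?_ (le_iSup (fun i => Submodule.map V.subtype (P' i)) j)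
      rw [hP', Submodule.map_comap_subtype]
      exact le_inf (hle j) le_rfl
  have hint : DirectSum.IsInternal P' :=
    DirectSum.isInternal_submodule_of_iSupIndep_of_iSup_eq_top hind' hsup'
  set equiv : (⨁ j, ↥(P' j)) ≃ₗ[A] ↥V := LinearEquiv.ofBijective (DirectSum.coeLinearMap P') hint with hequiv
  let ej : ∀ j : κ, ↥(P' j) ≃ₗ[A] ↥(P j) := fun j => Submodule.comapSubtypeEquivOfLe (hle j)
  set h : (⨁ j, ↥(P' j)) →ₗ[A] (∀ j, T j) :=
    LinearMap.pi (fun j => (g j) ∘ₗ (ej j).toLinearMap ∘ₗ DirectSum.component A κ _ j) with hh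
  have hhsurj : Function.Surjective h := by
    intro u
    have : ∀ j, ∃ b : ↥(P' j), g j (ej j b) = u j := by
      intro j
      obtain ⟨y, hy⟩ := hg j (u j)
      exact ⟨(ej j).symm y, by simpa using hy⟩
    choose b hb using this
    refine ⟨∑ j, DirectSum.lof A κ (fun j => ↥(P' j)) j (b j), ?_⟩
    funext j'
    rw [hh]
    simp only [LinearMap.pi_apply, LinearMap.coe_comp, Function.comp_apply, map_sum]
    rw [Finset.sum_eq_single j']
    · rw [DirectSum.component.lof_self]
      exact hb j'
    · intro j _ hj
      rw [DirectSum.component.of, dif_neg hj]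
      simp
    · intro hj
      exact absurd (Finset.mem_univ j') hj
  exact ⟨h ∘ₗ equiv.symm.toLinearMap, hhsurj.comp (LinearEquiv.surjective _)⟩
/-- Key lemma: if `Q` is the sum of `n` distributive submodules and a submodule of `Q`
surjects onto a power `κ → S` of a simple module `S`, then `card κ ≤ n`. -/
theorem power_bound {A : Type u_a} [Ring A] (S : Type u_s) [AddCommGroup S] [Module A S]
    [IsSimpleModule A S] :
    ∀ (n : ℕ) (Q : Type u_q) [AddCommGroup Q] [Module A Q] (D : Fin n → Submodule A Q),
      (∀ j, IsDistribModule A ↥(D j)) → (⨆ j, D j) = ⊤ →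
      ∀ (κ : Type) [Fintype κ] (V : Submodule A Q) (f : ↥V →ₗ[A] (κ → S)),
        Function.Surjective f → Fintype.card κ ≤ n := by
  intro n
  induction n with
  | zero =>
    intro Q _ _ D hd hsup κ _ V f hf
    have hbot : (⊤ : Submodule A Q) = ⊥ := by
      rw [← hsup]
      exact le_antisymm (iSup_le (fun j => Fin.elim0 j)) bot_le
    have hQ : Subsingleton Q := by
      constructor
      intro a b
      have ha : a ∈ (⊥ : Submodule A Q) := hbot ▸ Submodule.mem_top
      have hb : b ∈ (⊥ : Submodule A Q) := hbot ▸ Submodule.mem_top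
      rw [Submodule.mem_bot] at ha hb
      rw [ha, hb]
    have hVs : Subsingleton ↥V := ⟨fun a b => Subtype.ext (Subsingleton.elim _ _)⟩
    have hκS : Subsingleton (κ → S) := by
      constructor
      intro a b
      obtain ⟨x, rfl⟩ := hf a
      obtain ⟨y, rfl⟩ := hf b
      rw [Subsingleton.elim x y]
    have : IsEmpty κ := by
      by_contra hne
      rw [not_isEmpty_iff] at hne
      obtain ⟨i⟩ := hne
      haveI : Nontrivial S := IsSimpleModule.nontrivial A S
      obtain ⟨s, hs⟩ := exists_ne (0 : S)
      have := congrFun (Subsingleton.elim (fun _ : κ => s) (fun _ => 0)) i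
      exact hs this
    simp [Fintype.card_eq_zero]
  | succ n IH =>
    intro Q _ _ D hd hsup κ _ V f hf
    classical
    set Dl := D (Fin.last n) with hDl
    set π := Dl.mkQ with hπ
    set D' : Fin n → Submodule A (Q ⧸ Dl) := fun j => (D j.castSucc).map π with hD'
    have hd' : ∀ j, IsDistribModule A ↥(D' j) := fun j => isDistrib_map π _ (hd j.castSucc)
    have hsup' : ⨆ j, D' j = ⊤ := by
      have h1 : ⨆ i, (D i).map π = ⊤ := by
        rw [← Submodule.map_iSup, hsup, Submodule.map_top, Submodule.range_mkQ]
      refine le_antisymm le_top ?_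
      rw [← h1]
      refine iSup_le fun i => ?_
      refine Fin.lastCases ?_ (fun j => ?_) i
      · show Submodule.map π (D (Fin.last n)) ≤ _
        have hbot : Submodule.map π (D (Fin.last n)) = ⊥ := by
          refine le_antisymm ?_ bot_le
          rw [Submodule.map_le_iff_le_comap, Submodule.comap_bot, hπ, Submodule.ker_mkQ, hDl]
        rw [hbot]
        exact bot_le
      · exact le_iSup D' j
    set V₁ : Submodule A ↥V := Dl.comap V.subtype with hV₁
    set ρ : ↥V →ₗ[A] Q ⧸ Dl := π ∘ₗ V.subtype with hρ
    have hkerρ : LinearMap.ker ρ = V₁ := by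
      rw [hρ, LinearMap.ker_comp, hπ, Submodule.ker_mkQ, hV₁]
    set W : Submodule A (κ → S) := V₁.map f with hW
    by_cases hWbot : W = ⊥
    · -- V₁ ≤ ker f, factor f through the image of V in Q ⧸ Dl
      have hker : LinearMap.ker ρ ≤ LinearMap.ker f := by
        rw [hkerρ]
        intro x hx
        rw [LinearMap.mem_ker]
        have : f x ∈ W := Submodule.mem_map_of_mem hx
        rw [hWbot] at this
        exact (Submodule.mem_bot _).mp this
      obtain ⟨h, hhs⟩ := factor_through_range ρ f hf hker
      exact le_trans (IH (Q ⧸ Dl) D' hd' hsup' κ (LinearMap.range ρ) h hhs) (Nat.le_succ n)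
    · -- W is a nonzero distributive submodule of κ → S
      have hWdis : IsDistribModule A ↥W := by
        have h1 : IsDistribModule A ↥(V₁.map V.subtype) := by
          have h2 : V₁.map V.subtype = V ⊓ Dl := Submodule.map_comap_subtype _ _
          have h3 : IsDistribModule A ↥((V ⊓ Dl).comap Dl.subtype) :=
            isDistrib_submodule (hd (Fin.last n)) _
          have h4 : IsDistribModule A ↥(V ⊓ Dl) :=
            isDistrib_of_equiv (Submodule.comapSubtypeEquivOfLe inf_le_right) h3
          rw [h2]
          exact h4
        have h5 : IsDistribModule A ↥V₁ :=
          isDistrib_of_equiv (Submodule.equivMapOfInjective _ V.injective_subtype V₁).symm h1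
        exact isDistrib_map f V₁ h5
      obtain ⟨i, e, he⟩ := exists_proj_equiv W hWbot hWdis
      set φ' : S →ₗ[A] (κ → S) := W.subtype ∘ₗ e.symm.toLinearMap with hφ'
      have hφ'W : ∀ w : ↥W, φ' ((w : κ → S) i) = (w : κ → S) := by
        intro w
        rw [hφ']
        simp only [LinearMap.coe_comp, Function.comp_apply, LinearEquiv.coe_coe]
        rw [← he w, LinearEquiv.symm_apply_apply]
        rfl
      set κ' := {j : κ // j ≠ i} with hκ'
      set ψ : (κ → S) →ₗ[A] (κ' → S) := LinearMap.pi
        (fun j => (LinearMap.proj j.1 : (κ → S) →ₗ[A] S) -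
          ((LinearMap.proj j.1 : (κ → S) →ₗ[A] S) ∘ₗ φ' ∘ₗ (LinearMap.proj i : (κ → S) →ₗ[A] S)))
        with hψ
      have hψ_apply : ∀ (v : κ → S) (j : κ'), ψ v j = v j.1 - φ' (v i) j.1 := by
        intro v j
        rfl
      have hψW : ∀ w ∈ W, ψ w = 0 := by
        intro w hw
        funext j
        rw [hψ_apply]
        have := hφ'W ⟨w, hw⟩
        simp only at this
        rw [this]
        simp
      have hψsurj : Function.Surjective ψ := by
        intro u
        refine ⟨fun j => if h : j = i then 0 else u ⟨j, h⟩, ?_⟩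
        funext j
        rw [hψ_apply]
        simp [j.2]
      set g : ↥V →ₗ[A] (κ' → S) := ψ ∘ₗ f with hg
      have hgsurj : Function.Surjective g := by
        rw [hg]
        exact hψsurj.comp hf
      have hker : LinearMap.ker ρ ≤ LinearMap.ker g := by
        rw [hkerρ]
        intro x hx
        rw [LinearMap.mem_ker, hg]
        simp only [LinearMap.coe_comp, Function.comp_apply]
        exact hψW (f x) (Submodule.mem_map_of_mem hx)
      obtain ⟨h, hhs⟩ := factor_through_range ρ g hgsurj hker
      have hcard' : Fintype.card κ' ≤ n := IH (Q ⧸ Dl) D' hd' hsup' κ' (LinearMap.range ρ) h hhs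
      have hcard : Fintype.card κ' = Fintype.card κ - 1 := by
        have e2 : κ' ≃ {j : κ // ¬ j = i} := Equiv.subtypeEquivRight fun _ => Iff.rfl
        rw [Fintype.card_congr e2, Fintype.card_subtype_compl, Fintype.card_subtype_eq]
      have hpos : 1 ≤ Fintype.card κ := Fintype.card_pos_iff.mpr ⟨i⟩
      omega
/-- the right-multiplication orbit map `r ↦ op r • m` as an `Rᵐᵒᵖ`-linear map. -/
def opToFun (R : Type*) [Ring R] {M : Type*} [AddCommGroup M] [Module Rᵐᵒᵖ M] (m : M) :
    R →ₗ[Rᵐᵒᵖ] M where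
  toFun r := MulOpposite.op r • m
  map_add' x y := by
    show MulOpposite.op (x + y) • m = MulOpposite.op x • m + MulOpposite.op y • m
    rw [MulOpposite.op_add, add_smul]
  map_smul' a r := by
    show MulOpposite.op (a • r) • m = a • MulOpposite.op r • m
    rw [MulOpposite.smul_eq_mul_unop, MulOpposite.op_mul, MulOpposite.op_unop, mul_smul]

theorem opToFun_surj_of_span {R : Type*} [Ring R] {M : Type*} [AddCommGroup M]
    [Module Rᵐᵒᵖ M] (m : M) (h : Submodule.span Rᵐᵒᵖ ({m} : Set M) = ⊤) :
    Function.Surjective (opToFun R m) := by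
  rw [← LinearMap.range_eq_top, eq_top_iff, ← h, Submodule.span_le]
  intro y hy
  rw [Set.mem_singleton_iff] at hy
  subst hy
  refine ⟨(1 : R), ?_⟩
  show MulOpposite.op (1 : R) • y = y
  rw [MulOpposite.op_one, one_smul]

theorem simple_iso_quot {R : Type*} [Ring R] (T : Type*) [AddCommGroup T] [Module Rᵐᵒᵖ T]
    [IsSimpleModule Rᵐᵒᵖ T] :
    ∃ I : Submodule Rᵐᵒᵖ R, IsSimpleModule Rᵐᵒᵖ (R ⧸ I) ∧ Nonempty ((R ⧸ I) ≃ₗ[Rᵐᵒᵖ] T) := by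
  haveI := IsSimpleModule.nontrivial Rᵐᵒᵖ T
  obtain ⟨y, hy⟩ := exists_ne (0 : T)
  have hsurj : Function.Surjective (opToFun R y) := by
    have hne : LinearMap.range (opToFun R y) ≠ ⊥ := by
      intro hbot
      apply hy
      have hmem : opToFun R y (1 : R) ∈ LinearMap.range (opToFun R y) :=
        LinearMap.mem_range_self _ _
      rw [hbot, Submodule.mem_bot] at hmem
      have h1 : opToFun R y (1 : R) = y := by
        show MulOpposite.op (1 : R) • y = y
        rw [MulOpposite.op_one, one_smul]
      rw [← h1, hmem]
    rw [← LinearMap.range_eq_top]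
    exact (eq_bot_or_eq_top _).resolve_left hne
  exact ⟨LinearMap.ker (opToFun R y),
    IsSimpleModule.congr (LinearMap.quotKerEquivOfSurjective _ hsurj),
    ⟨LinearMap.quotKerEquivOfSurjective _ hsurj⟩⟩

theorem exists_coatom_of_span {A Q : Type*} [Ring A] [AddCommGroup Q] [Module A Q]
    (x : Q) (hx : x ≠ 0) :
    ∃ L : Submodule A ↥(Submodule.span A ({x} : Set Q)), IsCoatom L := by
  set C := Submodule.span A ({x} : Set Q) with hC
  haveI : Module.Finite A ↥C := Module.Finite.iff_fg.mpr (Submodule.fg_span_singleton x)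
  haveI : IsCoatomic (Submodule A ↥C) := by
    apply CompleteLattice.coatomic_of_top_compact
    rw [← Submodule.fg_iff_compact]
    exact Module.finite_def.mp ‹Module.Finite A ↥C›
  rcases eq_top_or_exists_le_coatom (⊥ : Submodule A ↥C) with htop | ⟨L, hL, -⟩
  · exfalso
    apply hx
    have hmem : (⟨x, Submodule.mem_span_singleton_self x⟩ : ↥C) ∈ (⊤ : Submodule A ↥C) :=
      Submodule.mem_top
    rw [← htop, Submodule.mem_bot] at hmem
    exact congrArg Subtype.val hmem
  · exact ⟨L, hL⟩
theorem ultimate_findim {R : Type*} [Ring R] (hfin : HasFinitelyManySimpleRightModules R)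
    (Q : Type*) [AddCommGroup Q] [Module Rᵐᵒᵖ Q] (n : ℕ) (D : Fin n → Submodule Rᵐᵒᵖ Q)
    (hd : ∀ j, IsDistribModule Rᵐᵒᵖ ↥(D j)) (hs : (⨆ j, D j) = ⊤) :
    ∀ (ι : Type) (X : ι → Submodule Rᵐᵒᵖ Q), iSupIndep X → (∀ i, X i ≠ ⊥) → Finite ι := by
  intro ι X hind hne
  by_contra hninf
  rw [not_finite_iff_infinite] at hninf
  obtain ⟨s, hserve⟩ := hfin
  have hx : ∀ t : ι, ∃ x : Q, x ∈ X t ∧ x ≠ 0 := fun t =>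
    Submodule.exists_mem_ne_zero_of_ne_bot (hne t)
  choose x hxX hx0 using hx
  set C : ι → Submodule Rᵐᵒᵖ Q := fun t => Submodule.span Rᵐᵒᵖ {x t} with hC
  have hCX : ∀ t, C t ≤ X t := fun t => (Submodule.span_singleton_le_iff_mem _ _).mpr (hxX t)
  have hindC : iSupIndep C := hind.mono hCX
  have hcl : ∀ t : ι, ∃ (J : Submodule Rᵐᵒᵖ R), J ∈ s ∧ IsSimpleModule Rᵐᵒᵖ (R ⧸ J) ∧
      ∃ g : ↥(C t) →ₗ[Rᵐᵒᵖ] (R ⧸ J), Function.Surjective g := by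
    intro t
    obtain ⟨L, hL⟩ := exists_coatom_of_span (A := Rᵐᵒᵖ) (x t) (hx0 t)
    haveI : IsSimpleModule Rᵐᵒᵖ (↥(C t) ⧸ L) := isSimpleModule_iff_isCoatom.mpr hL
    obtain ⟨I, hIsimple, ⟨eI⟩⟩ := simple_iso_quot (R := R) (↥(C t) ⧸ L)
    obtain ⟨J, hJs, ⟨eJ⟩⟩ := hserve I hIsimple
    haveI : IsSimpleModule Rᵐᵒᵖ (R ⧸ J) :=
      haveI := hIsimple
      IsSimpleModule.congr eJ.symm
    refine ⟨J, hJs, ‹_›, (eI.symm.trans eJ).toLinearMap ∘ₗ L.mkQ, ?_⟩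
    rw [LinearMap.coe_comp, LinearEquiv.coe_coe]
    exact (LinearEquiv.surjective (eI.symm.trans eJ)).comp (Submodule.mkQ_surjective L)
  choose J hJs hJsimple g hgsurj using hcl
  set cl : ι → {J' // J' ∈ s} := fun t => ⟨J t, hJs t⟩ with hclf
  obtain ⟨J₀, hJ₀⟩ := Finite.exists_infinite_fiber cl
  haveI := hJ₀
  set emb := Infinite.natEmbedding (cl ⁻¹' {J₀} : Set ι) with hemb
  set tsel : Fin (n + 1) → ι := fun j => (emb j.1 : ι) with htsel
  have htinj : Function.Injective tsel := by
    intro a b hab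
    have h1 : emb a.1 = emb b.1 := Subtype.ext hab
    have h2 : a.1 = b.1 := emb.injective h1
    exact Fin.ext h2
  have htfib : ∀ j : Fin (n + 1), cl (tsel j) = J₀ := fun j => (emb j.1).2
  have hJeq : ∀ j : Fin (n + 1), J (tsel j) = (J₀ : Submodule Rᵐᵒᵖ R) := by
    intro j
    have := htfib j
    exact congrArg Subtype.val this
  set P : Fin (n + 1) → Submodule Rᵐᵒᵖ Q := fun j => C (tsel j) with hP
  have hindP : iSupIndep P := hindC.comp htinj
  haveI hS : IsSimpleModule Rᵐᵒᵖ (R ⧸ (J₀ : Submodule Rᵐᵒᵖ R)) := by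
    have := hJsimple (tsel 0)
    rwa [hJeq 0] at this
  obtain ⟨f, hf⟩ := sup_surjection P hindP (fun _ => R ⧸ (J₀ : Submodule Rᵐᵒᵖ R))
    (fun j => (Submodule.quotEquivOfEq _ _ (hJeq j)).toLinearMap ∘ₗ g (tsel j))
    (fun j => by
      rw [LinearMap.coe_comp, LinearEquiv.coe_coe]
      exact (LinearEquiv.surjective (Submodule.quotEquivOfEq _ _ (hJeq j))).comp
        (hgsurj (tsel j)))
  have hle := power_bound (A := Rᵐᵒᵖ) (R ⧸ (J₀ : Submodule Rᵐᵒᵖ R)) n Q D hd hs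
    (Fin (n + 1)) (⨆ j, P j) f hf
  simp [Fintype.card_fin] at hle
theorem stmt5' (R : Type*) [Ring R]
    (hsd : ∃ (ι : Type) (N : ι → Submodule Rᵐᵒᵖ R),
      iSupIndep N ∧ iSup N = ⊤ ∧ ∀ i, IsDistribModule Rᵐᵒᵖ (N i))
    (hfin : HasFinitelyManySimpleRightModules R)
    (M : Type*) [AddCommGroup M] [Module Rᵐᵒᵖ M]
    (hcyc : ∃ m : M, Submodule.span Rᵐᵒᵖ {m} = ⊤) :
    ∀ N' : Submodule Rᵐᵒᵖ M, ∀ (ι : Type) (X : ι → Submodule Rᵐᵒᵖ (M ⧸ N')),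
      iSupIndep X → (∀ i, X i ≠ ⊥) → Finite ι := by
  obtain ⟨ι₀, N, hindN, hsupN, hdN⟩ := hsd
  obtain ⟨m, hm⟩ := hcyc
  intro N' ι X hind hne
  -- a finite subfamily of the N i already covers R
  have hcompact := Submodule.singleton_span_isCompactElement (R := Rᵐᵒᵖ) (1 : R)
  obtain ⟨F, hF⟩ := CompleteLattice.IsCompactElement.exists_finset_of_le_iSup _ hcompact N (by rw [hsupN]; exact le_top)
  have hspan1 : Submodule.span Rᵐᵒᵖ ({(1 : R)} : Set R) = ⊤ := by
    rw [eq_top_iff]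
    intro r _
    rw [Submodule.mem_span_singleton]
    refine ⟨MulOpposite.op r, ?_⟩
    rw [MulOpposite.smul_eq_mul_unop, MulOpposite.unop_op, one_mul]
  have hFtop : (⨆ i ∈ F, N i) = ⊤ := by
    rw [eq_top_iff, ← hspan1]
    exact hF
  set n := F.card with hn
  set DB : Fin n → Submodule Rᵐᵒᵖ R := fun j => N (F.equivFin.symm j : ι₀) with hDB
  have hDBsup : ⨆ j, DB j = ⊤ := by
    rw [hDB]
    have h1 : ⨆ j : Fin n, N ((F.equivFin.symm j : ↥F) : ι₀) = ⨆ i : ↥F, N i :=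
      Equiv.iSup_comp (g := fun i : ↥F => N i) F.equivFin.symm
    rw [h1]
    rw [iSup_subtype'] at hFtop
    exact hFtop
  -- surjection from R onto M ⧸ N'
  set g : R →ₗ[Rᵐᵒᵖ] M ⧸ N' := N'.mkQ ∘ₗ opToFun R m with hg
  have hgsurj : Function.Surjective g := by
    rw [hg, LinearMap.coe_comp]
    exact (Submodule.mkQ_surjective N').comp (opToFun_surj_of_span m hm)
  set D : Fin n → Submodule Rᵐᵒᵖ (M ⧸ N') := fun j => (DB j).map g with hD
  have hd : ∀ j, IsDistribModule Rᵐᵒᵖ ↥(D j) := fun j => isDistrib_map g _ (hdN _)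
  have hsup : ⨆ j, D j = ⊤ := by
    rw [hD, ← Submodule.map_iSup, hDBsup, Submodule.map_top, LinearMap.range_eq_top.mpr hgsurj]
  exact ultimate_findim hfin (M ⧸ N') n D hd hsup ι X hind hne

/-- If `R` is a right semidistributive ring with only finitely many simple right
`R`-modules up to isomorphism, then every cyclic right `R`-module is quotient
finite-dimensional. -/
theorem stmt5 (R : Type*) [Ring R] (hsd : IsRightSemidistributiveRing R)
    (hfin : HasFinitelyManySimpleRightModules R)
    (M : Type*) [AddCommGroup M] [Module Rᵐᵒᵖ M]
    (hcyc : ∃ m : M, Submodule.span Rᵐᵒᵖ {m} = ⊤) :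
    IsQFDModule Rᵐᵒᵖ M :=
  fun N' ι X hind hne => stmt5' R hsd hfin M hcyc N' ι X hind hne
end

section
/- Any finite direct sum of quotient finite-dimensional modules is a quotient finite-dimensional module: if M_1, ..., M_n are right R-modules each of which is quotient finite-dimensional, then M_1 \oplus \cdots \oplus M_n is quotient finite-dimensional. -/
section Aux

variable {R M M₂ : Type*} [Ring R] [AddCommGroup M] [Module R M]
  [AddCommGroup M₂] [Module R M₂]

/-- Finite dimensionality transfers along linear equivalences. -/
theorem findim_congr (e : M ≃ₗ[R] M₂) (h : IsFinDimModule R M) : IsFinDimModule R M₂ := by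
  intro ι N hind hne
  refine h ι (fun i => (Submodule.orderIsoMapComap e.symm) (N i)) ?_ ?_
  · exact hind.map_orderIso (Submodule.orderIsoMapComap e.symm)
  · intro i hbot
    apply hne i
    have h2 := congrArg (Submodule.orderIsoMapComap e.symm).symm hbot
    rw [OrderIso.symm_apply_apply] at h2
    rw [h2]
    exact (Submodule.orderIsoMapComap e.symm).symm.map_bot

/-- A module linearly surjected-on by a QFD module is QFD. -/
theorem qfd_of_surjective (f : M →ₗ[R] M₂) (hf : Function.Surjective f)
    (h : IsQFDModule R M) : IsQFDModule R M₂ := by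
  intro N₂
  have hg : Function.Surjective (N₂.mkQ.comp f) :=
    (Submodule.mkQ_surjective N₂).comp hf
  have e := (N₂.mkQ.comp f).quotKerEquivOfSurjective hg
  exact findim_congr e (h (LinearMap.ker (N₂.mkQ.comp f)))

theorem findim_of_qfd (h : IsQFDModule R M) : IsFinDimModule R M :=
  findim_congr (Submodule.quotEquivOfEqBot ⊥ rfl) (h ⊥)

/-- if `x` is in a `biSup` over a set, it is in the `biSup` over a finite subset. -/
theorem mem_biSup_finset {κ : Type*} (P : κ → Submodule R M) (A : Set κ) {x : M}
    (hx : x ∈ ⨆ i ∈ A, P i) :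
    ∃ s : Finset κ, ↑s ⊆ A ∧ x ∈ ⨆ i ∈ s, P i := by
  classical
  have hx' : x ∈ ⨆ i : A, P ↑i := by
    rwa [iSup_subtype'] at hx
  obtain ⟨s, hs⟩ := Submodule.mem_iSup_iff_exists_finset.mp hx'
  refine ⟨s.image Subtype.val, ?_, ?_⟩
  · intro i hi
    simp only [Finset.coe_image, Set.mem_image, Finset.mem_coe] at hi
    obtain ⟨j, _, rfl⟩ := hi
    exact j.2
  · have hle : (⨆ i ∈ s, P ↑i) ≤ ⨆ i ∈ s.image Subtype.val, P i :=
      iSup₂_le fun j hj =>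
        le_iSup₂ (f := fun i (_ : i ∈ s.image Subtype.val) => P i) (↑j)
          (Finset.mem_image_of_mem _ hj)
    exact hle hs

/-- For an independent family of submodules, the sups over two disjoint index sets
are disjoint. -/
theorem iSupIndep_biSup_disjoint {κ : Type*} {P : κ → Submodule R M}
    (hP : iSupIndep P) {A B : Set κ} (hAB : ∀ i ∈ A, i ∉ B) :
    Disjoint (⨆ i ∈ A, P i) (⨆ i ∈ B, P i) := by
  classical
  have key : ∀ s : Finset κ, (∀ i ∈ s, i ∉ B) → Disjoint (⨆ i ∈ s, P i) (⨆ i ∈ B, P i) := by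
    intro s
    induction s using Finset.induction_on with
    | empty => simp
    | @insert a s' ha ih =>
      intro hdisj
      have h2 : Disjoint (⨆ i ∈ s', P i) (⨆ i ∈ B, P i) :=
        ih fun i hi => hdisj i (Finset.mem_insert_of_mem hi)
      have h1 : Disjoint (P a) ((⨆ i ∈ s', P i) ⊔ ⨆ i ∈ B, P i) := by
        have ha' : a ∉ (↑s' ∪ B : Set κ) := by
          simp only [Set.mem_union, Finset.mem_coe]
          rintro (h | h)
          · exact ha h
          · exact hdisj a (Finset.mem_insert_self a s') h
        have := hP.disjoint_biSup ha'
        rwa [iSup_union] at this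
      have := h2.disjoint_sup_left_of_disjoint_sup_right h1
      rwa [Finset.iSup_insert]
  rw [Submodule.disjoint_def]
  intro x hxA hxB
  obtain ⟨s, hsA, hxs⟩ := mem_biSup_finset P A hxA
  have := key s fun i hi => hAB i (hsA hi)
  exact (Submodule.disjoint_def.mp this) x hxs hxB

/-- Finite dimensionality is closed under extensions. -/
theorem findim_ext (S : Submodule R M) (h1 : IsFinDimModule R S)
    (h2 : IsFinDimModule R (M ⧸ S)) : IsFinDimModule R M := by
  classical
  intro ι N hind hne
  by_contra hfin
  rw [not_finite_iff_infinite] at hfin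
  -- re-index a countable subfamily by ℕ × ℕ
  let f : ℕ × ℕ ↪ ι := Nat.pairEquiv.toEmbedding.trans (Infinite.natEmbedding ι)
  set P : ℕ × ℕ → Submodule R M := N ∘ f with hP
  have hPind : iSupIndep P := hind.comp f.injective
  have hPne : ∀ p, P p ≠ ⊥ := fun p => hne (f p)
  -- blocks
  set D : ℕ → Submodule R M := fun k => ⨆ j, P (k, j) with hD
  have hDind : iSupIndep D := by
    intro k
    have hsub : (⨆ (l) (_ : l ≠ k), D l) ≤ ⨆ p ∈ {p : ℕ × ℕ | p.1 ≠ k}, P p := by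
      refine iSup₂_le fun l hl => iSup_le fun j => ?_
      exact le_biSup _ (by simpa using hl)
    have hsub2 : D k ≤ ⨆ p ∈ {p : ℕ × ℕ | p.1 = k}, P p := by
      refine iSup_le fun j => ?_
      exact le_biSup _ (by simp)
    have hdisj : Disjoint (⨆ p ∈ {p : ℕ × ℕ | p.1 = k}, P p)
        (⨆ p ∈ {p : ℕ × ℕ | p.1 ≠ k}, P p) :=
      iSupIndep_biSup_disjoint hPind (by intro p hp; simpa using hp)
    exact Disjoint.mono hsub2 hsub hdisj
  -- only finitely many blocks meet S
  set F : Set ℕ := {k | ¬ Disjoint S (D k)} with hF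
  have hFfin : Finite F := by
    set C : F → Submodule R S := fun k => Submodule.comap S.subtype (S ⊓ D ↑k) with hC
    have hmapC : ∀ k : F, Submodule.map S.subtype (C k) = S ⊓ D ↑k := by
      intro k
      rw [hC, Submodule.map_comap_eq, Submodule.range_subtype, ← inf_assoc, inf_idem]
    have hSDind : iSupIndep fun k : F => S ⊓ D ↑k :=
      (hDind.mono fun k => inf_le_right).comp Subtype.val_injective
    refine h1 F C ?_ ?_
    · intro k
      rw [Submodule.disjoint_def]
      intro x hx1 hx2
      have hx1' : (x : M) ∈ S ⊓ D ↑k := by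
        rw [← hmapC k]; exact Submodule.mem_map_of_mem hx1
      have hx2' : (x : M) ∈ ⨆ (l) (_ : l ≠ k), S ⊓ D ↑l := by
        have hmem := Submodule.mem_map_of_mem (f := S.subtype) hx2
        simp only [Submodule.map_iSup] at hmem
        have heq : (⨆ (l) (_ : l ≠ k), Submodule.map S.subtype (C l))
            = ⨆ (l) (_ : l ≠ k), S ⊓ D ↑l :=
          iSup_congr fun l => iSup_congr fun _ => hmapC l
        rwa [heq] at hmem
      have hzero : (x : M) = 0 :=
        Submodule.disjoint_def.mp (hSDind k) (x : M) hx1' hx2'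
      exact Subtype.ext (by simpa using hzero)
    · intro k hbot
      apply k.2
      rw [disjoint_iff]
      have := congrArg (Submodule.map S.subtype) hbot
      rw [hmapC k, Submodule.map_bot] at this
      exact this
  -- pick a block disjoint from S
  have hFfin' : F.Finite := Set.finite_coe_iff.mp hFfin
  obtain ⟨k₀, hk₀⟩ := (hFfin'.infinite_compl).nonempty
  have hSD : Disjoint S (D k₀) := not_not.mp hk₀
  -- images of block k₀ in M ⧸ S form an infinite independent family of nonzeros
  set Q : ℕ → Submodule R (M ⧸ S) := fun j => Submodule.map S.mkQ (P (k₀, j)) with hQ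
  have hPk : iSupIndep fun j : ℕ => P (k₀, j) :=
    hPind.comp (f := fun j : ℕ => ((k₀, j) : ℕ × ℕ))
      (fun a b hab => congrArg Prod.snd hab)
  have hblock : ∀ j : ℕ, (⨆ (l) (_ : l ≠ j), P (k₀, l)) ≤ D k₀ :=
    fun j => iSup₂_le fun l _ => le_iSup (fun l => P (k₀, l)) l
  have hQind : iSupIndep Q := by
    intro j
    have hsup : (⨆ (l) (_ : l ≠ j), Q l)
        = Submodule.map S.mkQ (⨆ (l) (_ : l ≠ j), P (k₀, l)) := by
      simp only [hQ, Submodule.map_iSup]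
    rw [Submodule.disjoint_def]
    intro x hx1 hx2
    rw [hsup] at hx2
    obtain ⟨n, hn, rfl⟩ := hx1
    obtain ⟨m, hm, hmx⟩ := hx2
    have hnm : m - n ∈ S := (Submodule.Quotient.eq S).mp hmx
    have hnmD : m - n ∈ D k₀ := by
      refine sub_mem (hblock j hm) ?_
      exact le_iSup (fun l => P (k₀, l)) j hn
    have hnm0 : m - n = 0 := by
      simpa using (hSD.le_bot (Submodule.mem_inf.mpr ⟨hnm, hnmD⟩) :
        m - n ∈ (⊥ : Submodule R M))
    rw [sub_eq_zero] at hnm0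
    have hnmem : n ∈ P (k₀, j) ⊓ ⨆ (l) (_ : l ≠ j), P (k₀, l) :=
      Submodule.mem_inf.mpr ⟨hn, hnm0 ▸ hm⟩
    have hn0 : n = 0 := by
      simpa using ((hPk j).le_bot hnmem : n ∈ (⊥ : Submodule R M))
    simp [hn0]
  have hQne : ∀ j, Q j ≠ ⊥ := by
    intro j hbot
    have hle : P (k₀, j) ≤ S := by
      intro x hx
      have : S.mkQ x ∈ Q j := Submodule.mem_map_of_mem hx
      rw [hbot] at this
      have hx0 : S.mkQ x = 0 := this
      rwa [← Submodule.Quotient.mk_eq_zero S]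
    have : P (k₀, j) ≤ ⊥ := by
      refine le_trans (le_inf hle (le_iSup (fun l => P (k₀, l)) j)) ?_
      exact hSD.le_bot
    exact hPne (k₀, j) (le_bot_iff.mp this)
  exact absurd (h2 ℕ Q hQind hQne) (by exact fun hf => not_finite ℕ)

/-- A subsingleton module is QFD. -/
theorem qfd_of_subsingleton [Subsingleton M] : IsQFDModule R M := by
  intro N ι fam hind hne
  have hsub : Subsingleton (M ⧸ N) := by
    constructor
    intro a b
    obtain ⟨x, rfl⟩ := Submodule.mkQ_surjective N a
    obtain ⟨y, rfl⟩ := Submodule.mkQ_surjective N b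
    exact congrArg N.mkQ (Subsingleton.elim x y)
  by_contra hfin
  rw [not_finite_iff_infinite] at hfin
  obtain ⟨i⟩ := (inferInstance : Nonempty ι)
  apply hne i
  ext x
  simp only [Submodule.mem_bot]
  constructor
  · intro _; exact Subsingleton.elim x 0
  · intro hx; rw [hx]; exact zero_mem _

/-- QFD is closed under binary products. -/
theorem qfd_prod {A B : Type*} [AddCommGroup A] [Module R A] [AddCommGroup B] [Module R B]
    (hA : IsQFDModule R A) (hB : IsQFDModule R B) : IsQFDModule R (A × B) := by
  intro K
  set g : A →ₗ[R] (A × B) ⧸ K := K.mkQ.comp (LinearMap.inl R A B) with hg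
  set S := LinearMap.range g with hS
  have h1 : IsFinDimModule R S := findim_congr g.quotKerEquivRange (hA (LinearMap.ker g))
  set g2 : B →ₗ[R] ((A × B) ⧸ K) ⧸ S := S.mkQ.comp (K.mkQ.comp (LinearMap.inr R A B)) with hg2
  have hg2surj : Function.Surjective g2 := by
    intro z
    obtain ⟨w, rfl⟩ := Submodule.mkQ_surjective S z
    obtain ⟨⟨a, b⟩, rfl⟩ := Submodule.mkQ_surjective K w
    refine ⟨b, ?_⟩
    have hmem : K.mkQ ((0 : A), b) - K.mkQ (a, b) ∈ S := by
      have hp : ((0 : A), b) - (a, b) = (-a, (0 : B)) := by ext <;> simp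
      rw [← map_sub, hp]
      exact ⟨-a, rfl⟩
    exact (Submodule.Quotient.eq S).mpr hmem
  have h2 : IsFinDimModule R (((A × B) ⧸ K) ⧸ S) :=
    findim_congr (g2.quotKerEquivOfSurjective hg2surj) (hB (LinearMap.ker g2))
  exact findim_ext S h1 h2

end Aux

/-- QFD is closed under finite products. -/
theorem qfd_pi (R' : Type*) [Ring R'] : ∀ (n : ℕ) (M : Fin n → Type u)
    [∀ i, AddCommGroup (M i)] [∀ i, Module R' (M i)],
    (∀ i, IsQFDModule R' (M i)) → IsQFDModule R' (Π i, M i) := by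
  intro n
  induction n with
  | zero =>
    intro M _ _ _
    exact qfd_of_subsingleton
  | succ n ih =>
    intro M _ _ h
    let f : (M 0 × Π j : Fin n, M j.succ) →ₗ[R'] Π i : Fin (n + 1), M i :=
      LinearMap.pi (fun i => Fin.cases
        (motive := fun i => (M 0 × Π j : Fin n, M j.succ) →ₗ[R'] M i)
        (LinearMap.fst R' (M 0) (Π j : Fin n, M j.succ))
        (fun j => (LinearMap.proj j).comp (LinearMap.snd R' (M 0) (Π j : Fin n, M j.succ))) i)
    have hf : Function.Surjective f := by
      intro x
      refine ⟨(x 0, fun j => x j.succ), ?_⟩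
      funext i
      refine Fin.cases ?_ (fun j => ?_) i
      · simp [f, LinearMap.pi_apply]
      · simp [f, LinearMap.pi_apply]
    exact qfd_of_surjective f hf
      (qfd_prod (h 0) (ih (fun j => M j.succ) (fun j => h j.succ)))



/-- A finite direct sum of quotient finite-dimensional right `R`-modules (i.e.
`Rᵐᵒᵖ`-modules) is quotient finite-dimensional. -/
theorem stmt7 (R : Type*) [Ring R] (n : ℕ) (M : Fin n → Type*)
    [∀ i, AddCommGroup (M i)] [∀ i, Module Rᵐᵒᵖ (M i)]
    (h : ∀ i, IsQFDModule Rᵐᵒᵖ (M i)) :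
    IsQFDModule Rᵐᵒᵖ (Π i, M i) :=
  qfd_pi Rᵐᵒᵖ n M h
end

section
/- Let F be a field and let A be the 5-dimensional F-subalgebra of the 3x3 matrix algebra over F consisting of all matrices (f_{ij}) with f_{21} = f_{23} = f_{31} = f_{32} = 0 (i.e., whose only possibly nonzero entries are f_{11}, f_{12}, f_{13}, f_{22}, f_{33}). Then A is an Artinian right semidistributive ring which is not right serial. -/
/-- A module is *uniserial* if its submodules are linearly ordered by inclusion. -/
def IsUniserialModule (R M : Type*) [Ring R] [AddCommGroup M] [Module R M] : Prop :=
  ∀ X Y : Submodule R M, X ≤ Y ∨ Y ≤ X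

/-- A ring `A` is *right serial* if, as a right module over itself
(i.e. as an `Aᵐᵒᵖ`-module), it is a direct sum of uniserial submodules. -/
def IsRightSerialRing (A : Type*) [Ring A] : Prop :=
  ∃ (ι : Type) (N : ι → Submodule Aᵐᵒᵖ A),
    iSupIndep N ∧ iSup N = ⊤ ∧ ∀ i, IsUniserialModule Aᵐᵒᵖ (N i)

/-- The subalgebra of `3 × 3` matrices over `F` whose only possibly nonzero entries are
`f₁₁, f₁₂, f₁₃, f₂₂, f₃₃`; it is `5`-dimensional over `F`. -/
def upperAlg (F : Type*) [Field F] : Subalgebra F (Matrix (Fin 3) (Fin 3) F) where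
  carrier := {M | M 1 0 = 0 ∧ M 1 2 = 0 ∧ M 2 0 = 0 ∧ M 2 1 = 0}
  add_mem' := by
    rintro x y ⟨h1, h2, h3, h4⟩ ⟨g1, g2, g3, g4⟩
    simp_all [Matrix.add_apply]
  mul_mem' := by
    rintro x y ⟨h1, h2, h3, h4⟩ ⟨g1, g2, g3, g4⟩
    simp_all [Matrix.mul_apply, Fin.sum_univ_three]
  algebraMap_mem' := by
    intro r
    simp [Matrix.algebraMap_matrix_apply]

set_option synthInstance.maxHeartbeats 1000000
set_option maxHeartbeats 1000000

namespace UA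

variable {F : Type*} [Field F]
open scoped Classical

lemma op_smul (m x : upperAlg F) : (MulOpposite.op m) • x = x * m := rfl

lemma mul_entry (x y : upperAlg F) (i j : Fin 3) :
    ((x * y : upperAlg F) : Matrix (Fin 3) (Fin 3) F) i j
      = ∑ k, (x : Matrix (Fin 3) (Fin 3) F) i k * (y : Matrix (Fin 3) (Fin 3) F) k j := by
  rw [show ((x * y : upperAlg F) : Matrix (Fin 3) (Fin 3) F)
      = (x : Matrix (Fin 3) (Fin 3) F) * y from rfl, Matrix.mul_apply]

/-- Build a submodule of the right regular module from entry-vanishing conditions. -/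
def eS (s : List (Fin 3 × Fin 3))
    (hcl : ∀ (x m : upperAlg F), (∀ p ∈ s, (x : Matrix (Fin 3) (Fin 3) F) p.1 p.2 = 0) →
      ∀ p ∈ s, ((x * m : upperAlg F) : Matrix (Fin 3) (Fin 3) F) p.1 p.2 = 0) :
    Submodule (upperAlg F)ᵐᵒᵖ (upperAlg F) where
  carrier := {x | ∀ p ∈ s, (x : Matrix (Fin 3) (Fin 3) F) p.1 p.2 = 0}
  add_mem' := by
    intro x y hx hy p hp
    have : ((x + y : upperAlg F) : Matrix (Fin 3) (Fin 3) F) p.1 p.2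
        = (x : Matrix (Fin 3) (Fin 3) F) p.1 p.2 + (y : Matrix (Fin 3) (Fin 3) F) p.1 p.2 := rfl
    rw [this, hx p hp, hy p hp, add_zero]
  zero_mem' := by intro p hp; rfl
  smul_mem' := by
    intro c x hx
    rw [← MulOpposite.op_unop c, op_smul]
    exact hcl x c.unop hx

lemma mem_eS {s} {hcl} (x : upperAlg F) :
    x ∈ eS s hcl ↔ ∀ p ∈ s, (x : Matrix (Fin 3) (Fin 3) F) p.1 p.2 = 0 := Iff.rfl

lemma eS_le_eS {s t : List (Fin 3 × Fin 3)} {h h'} (hsub : ∀ p ∈ t, p ∈ s) :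
    (eS (F := F) s h) ≤ eS t h' := fun _ hx p hp => hx p (hsub p hp)

def N0 : Submodule (upperAlg F)ᵐᵒᵖ (upperAlg F) :=
  eS [(1,1), (2,2)] (by
    rintro x m hx p hp
    obtain ⟨x1,x2,x3,x4⟩ := x.2
    have h11 := hx (1,1) (by simp)
    have h22 := hx (2,2) (by simp)
    rw [mul_entry]
    fin_cases hp <;> simp_all [Fin.sum_univ_three])

def N1 : Submodule (upperAlg F)ᵐᵒᵖ (upperAlg F) :=
  eS [(0,0), (0,1), (0,2), (2,2)] (by
    rintro x m hx p hp
    obtain ⟨x1,x2,x3,x4⟩ := x.2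
    obtain ⟨m1,m2,m3,m4⟩ := m.2
    have h1 := hx (0,0) (by simp)
    have h2 := hx (0,1) (by simp)
    have h3 := hx (0,2) (by simp)
    have h4 := hx (2,2) (by simp)
    rw [mul_entry]
    fin_cases hp <;> simp_all [Fin.sum_univ_three])

def N2 : Submodule (upperAlg F)ᵐᵒᵖ (upperAlg F) :=
  eS [(0,0), (0,1), (0,2), (1,1)] (by
    rintro x m hx p hp
    obtain ⟨x1,x2,x3,x4⟩ := x.2
    obtain ⟨m1,m2,m3,m4⟩ := m.2
    have h1 := hx (0,0) (by simp)
    have h2 := hx (0,1) (by simp)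
    have h3 := hx (0,2) (by simp)
    have h4 := hx (1,1) (by simp)
    rw [mul_entry]
    fin_cases hp <;> simp_all [Fin.sum_univ_three])

def K0 : Submodule (upperAlg F)ᵐᵒᵖ (upperAlg F) :=
  eS [(0,0), (0,1), (0,2)] (by
    rintro x m hx p hp
    obtain ⟨m1,m2,m3,m4⟩ := m.2
    have h1 := hx (0,0) (by simp)
    have h2 := hx (0,1) (by simp)
    have h3 := hx (0,2) (by simp)
    rw [mul_entry]
    fin_cases hp <;> simp_all [Fin.sum_univ_three])

def K1 : Submodule (upperAlg F)ᵐᵒᵖ (upperAlg F) :=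
  eS [(1,1)] (by
    rintro x m hx p hp
    obtain ⟨x1,x2,x3,x4⟩ := x.2
    have h1 := hx (1,1) (by simp)
    rw [mul_entry]
    fin_cases hp <;> simp_all [Fin.sum_univ_three])

def K2 : Submodule (upperAlg F)ᵐᵒᵖ (upperAlg F) :=
  eS [(2,2)] (by
    rintro x m hx p hp
    obtain ⟨x1,x2,x3,x4⟩ := x.2
    have h1 := hx (2,2) (by simp)
    rw [mul_entry]
    fin_cases hp <;> simp_all [Fin.sum_univ_three])

def K00 : Submodule (upperAlg F)ᵐᵒᵖ (upperAlg F) :=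
  eS [(0,0)] (by
    rintro x m hx p hp
    obtain ⟨m1,m2,m3,m4⟩ := m.2
    have h1 := hx (0,0) (by simp)
    rw [mul_entry]
    fin_cases hp <;> simp_all [Fin.sum_univ_three])

def I1 : Submodule (upperAlg F)ᵐᵒᵖ (upperAlg F) :=
  eS [(0,0), (0,2), (1,1), (2,2)] (by
    rintro x m hx p hp
    obtain ⟨x1,x2,x3,x4⟩ := x.2
    obtain ⟨m1,m2,m3,m4⟩ := m.2
    have h1 := hx (0,0) (by simp)
    have h2 := hx (0,2) (by simp)
    have h3 := hx (1,1) (by simp)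
    have h4 := hx (2,2) (by simp)
    rw [mul_entry]
    fin_cases hp <;> simp_all [Fin.sum_univ_three])

def I2 : Submodule (upperAlg F)ᵐᵒᵖ (upperAlg F) :=
  eS [(0,0), (0,1), (1,1), (2,2)] (by
    rintro x m hx p hp
    obtain ⟨x1,x2,x3,x4⟩ := x.2
    obtain ⟨m1,m2,m3,m4⟩ := m.2
    have h1 := hx (0,0) (by simp)
    have h2 := hx (0,1) (by simp)
    have h3 := hx (1,1) (by simp)
    have h4 := hx (2,2) (by simp)
    rw [mul_entry]
    fin_cases hp <;> simp_all [Fin.sum_univ_three])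

/-- general element of the algebra -/
def el (a b c d e : F) : upperAlg F :=
  ⟨!![a,b,c;0,d,0;0,0,e], by refine ⟨?_,?_,?_,?_⟩ <;> simp [Matrix.vecHead, Matrix.vecTail]⟩

lemma coe_el (a b c d e : F) :
    ((el a b c d e : upperAlg F) : Matrix (Fin 3) (Fin 3) F) = !![a,b,c;0,d,0;0,0,e] := rfl


def v (a b c : F) : ↥(N0 (F := F)) :=
  ⟨el a b c 0 0, by intro p hp; fin_cases hp <;> simp [coe_el, Matrix.vecHead, Matrix.vecTail]⟩

lemma v00 {a b c : F} : ((v a b c : upperAlg F) : Matrix (Fin 3) (Fin 3) F) 0 0 = a := rfl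
lemma v01 {a b c : F} : ((v a b c : upperAlg F) : Matrix (Fin 3) (Fin 3) F) 0 1 = b := rfl
lemma v02 {a b c : F} : ((v a b c : upperAlg F) : Matrix (Fin 3) (Fin 3) F) 0 2 = c := rfl

lemma nf0 (x : ↥(N0 (F := F))) :
    ∃ a b c, x = v a b c := by
  refine ⟨((x : upperAlg F) : Matrix (Fin 3) (Fin 3) F) 0 0,
    ((x : upperAlg F) : Matrix (Fin 3) (Fin 3) F) 0 1,
    ((x : upperAlg F) : Matrix (Fin 3) (Fin 3) F) 0 2, ?_⟩
  obtain ⟨h1, h2, h3, h4⟩ := (x : upperAlg F).2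
  have k1 := x.2 (1,1) (by simp)
  have k2 := x.2 (2,2) (by simp)
  apply Subtype.ext; apply Subtype.ext
  ext i j
  fin_cases i <;> fin_cases j <;>
    simp_all [v, coe_el, Matrix.vecHead, Matrix.vecTail]

lemma v_inj {a b c a' b' c' : F} (h : v a b c = v (F := F) a' b' c') :
    a = a' ∧ b = b' ∧ c = c' :=
  ⟨congrArg (fun t : ↥(N0 (F := F)) =>
      ((t : upperAlg F) : Matrix (Fin 3) (Fin 3) F) 0 0) h,
   congrArg (fun t : ↥(N0 (F := F)) =>
      ((t : upperAlg F) : Matrix (Fin 3) (Fin 3) F) 0 1) h,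
   congrArg (fun t : ↥(N0 (F := F)) =>
      ((t : upperAlg F) : Matrix (Fin 3) (Fin 3) F) 0 2) h⟩

lemma v_zero : v (0 : F) 0 0 = 0 := by
  apply Subtype.ext; apply Subtype.ext
  ext i j
  fin_cases i <;> fin_cases j <;> simp [v, coe_el, Matrix.vecHead, Matrix.vecTail]

lemma v_add {a b c a' b' c' : F} :
    v a b c + v a' b' c' = v (F := F) (a + a') (b + b') (c + c') := by
  apply Subtype.ext; apply Subtype.ext
  ext i j
  fin_cases i <;> fin_cases j <;>
    simp [v, coe_el, Matrix.vecHead, Matrix.vecTail]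

lemma smul_v_coe (m : upperAlg F) (x : ↥(N0 (F := F))) :
    ((MulOpposite.op m • x : ↥(N0 (F := F))) : upperAlg F) = (x : upperAlg F) * m := rfl

lemma vD2 {W : Submodule (upperAlg F)ᵐᵒᵖ ↥(N0 (F := F))} {a b c : F}
    (h : v a b c ∈ W) (l mu : F) : v 0 (l * b) (mu * c) ∈ W := by
  have h2 := W.smul_mem (MulOpposite.op (el 0 0 0 l mu)) h
  have he : MulOpposite.op (el (0:F) 0 0 l mu) • v a b c = v 0 (l * b) (mu * c) := by
    apply Subtype.ext; apply Subtype.ext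
    show ((v a b c : upperAlg F) * el 0 0 0 l mu : upperAlg F).1 = _
    ext i j
    rw [mul_entry]
    fin_cases i <;> fin_cases j <;>
      simp [v, coe_el, Fin.sum_univ_three, Matrix.vecHead, Matrix.vecTail, mul_comm]
  rwa [he] at h2

lemma vD1 {W : Submodule (upperAlg F)ᵐᵒᵖ ↥(N0 (F := F))} {a b c : F}
    (h : v a b c ∈ W) (ha : a ≠ 0) (p q r : F) : v p q r ∈ W := by
  have h2 := W.smul_mem (MulOpposite.op (el (p/a) (q/a) (r/a) 0 0)) h
  have he : MulOpposite.op (el (p/a) (q/a) (r/a) (0:F) 0) • v a b c = v p q r := by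
    apply Subtype.ext; apply Subtype.ext
    show ((v a b c : upperAlg F) * el (p/a) (q/a) (r/a) 0 0 : upperAlg F).1 = _
    ext i j
    rw [mul_entry]
    fin_cases i <;> fin_cases j <;>
      · simp [v, coe_el, Fin.sum_univ_three, Matrix.vecHead, Matrix.vecTail]
        try field_simp
        try ring
  rwa [he] at h2



lemma mem_inf_of {X Y : Submodule (upperAlg F)ᵐᵒᵖ ↥(N0 (F := F))} {b c b' c' : F}
    (hx : v 0 b c ∈ X) (hy : v 0 b' c' ∈ Y) :
    v 0 (if b = 0 then 0 else b') (if c = 0 then 0 else c') ∈ X ⊓ Y := by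
  refine Submodule.mem_inf.2 ⟨?_, ?_⟩
  · have h := vD2 hx (if b = 0 then 0 else b'/b) (if c = 0 then 0 else c'/c)
    have e1 : (if b = 0 then (0:F) else b'/b) * b = (if b = 0 then 0 else b') := by
      by_cases hb : b = 0 <;> simp [hb, div_mul_cancel₀]
    have e2 : (if c = 0 then (0:F) else c'/c) * c = (if c = 0 then 0 else c') := by
      by_cases hc : c = 0 <;> simp [hc, div_mul_cancel₀]
    rwa [e1, e2] at h
  · have h := vD2 hy (if b = 0 then (0:F) else 1) (if c = 0 then (0:F) else 1)
    have e1 : (if b = 0 then (0:F) else 1) * b' = (if b = 0 then 0 else b') := by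
      by_cases hb : b = 0 <;> simp [hb]
    have e2 : (if c = 0 then (0:F) else 1) * c' = (if c = 0 then 0 else c') := by
      by_cases hc : c = 0 <;> simp [hc]
    rwa [e1, e2] at h

theorem distribN0 : IsDistribModule (upperAlg F)ᵐᵒᵖ ↥(N0 (F := F)) := by
  intro X Y Z
  refine le_antisymm ?_ le_inf_sup
  rintro x hx
  obtain ⟨hxX, hxYZ⟩ := Submodule.mem_inf.1 hx
  obtain ⟨y, hy, z, hz, hyz⟩ := Submodule.mem_sup.1 hxYZ
  obtain ⟨a, b, c, rfl⟩ := nf0 x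
  obtain ⟨a', b', c', rfl⟩ := nf0 y
  obtain ⟨a'', b'', c'', rfl⟩ := nf0 z
  rcases eq_or_ne a' 0 with ha' | ha'
  · rcases eq_or_ne a'' 0 with ha'' | ha''
    · subst ha'; subst ha''
      rw [v_add] at hyz
      obtain ⟨hA, hB, hC⟩ := v_inj hyz.symm
      rw [zero_add] at hA
      subst hA
      have hy' := mem_inf_of hxX hy
      have hz' := mem_inf_of hxX hz
      refine Submodule.mem_sup.2 ⟨_, hy', _, hz', ?_⟩
      rw [v_add]
      have e1 : (if b = 0 then (0:F) else b') + (if b = 0 then 0 else b'') = b := by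
        by_cases hb : b = 0 <;> simp [hb]
        rw [hB]
      have e2 : (if c = 0 then (0:F) else c') + (if c = 0 then 0 else c'') = c := by
        by_cases hc : c = 0 <;> simp [hc]
        rw [hC]
      rw [e1, e2, add_zero]
    · exact Submodule.mem_sup_right (Submodule.mem_inf.2 ⟨hxX, vD1 hz ha'' a b c⟩)
  · exact Submodule.mem_sup_left (Submodule.mem_inf.2 ⟨hxX, vD1 hy ha' a b c⟩)

lemma distrib_of_cls {R M : Type*} [Ring R] [AddCommGroup M] [Module R M]
    (h : ∀ W : Submodule R M, W = ⊥ ∨ W = ⊤) : IsDistribModule R M := by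
  intro X Y Z
  rcases h X with rfl | rfl <;> rcases h Y with rfl | rfl <;> rcases h Z with rfl | rfl <;> simp

def w1 (d : F) : ↥(N1 (F := F)) :=
  ⟨el 0 0 0 d 0, by intro p hp; fin_cases hp <;> simp [coe_el, Matrix.vecHead, Matrix.vecTail]⟩

lemma nf1 (x : ↥(N1 (F := F))) : ∃ d, x = w1 d := by
  refine ⟨((x : upperAlg F) : Matrix (Fin 3) (Fin 3) F) 1 1, ?_⟩
  obtain ⟨h1, h2, h3, h4⟩ := (x : upperAlg F).2
  have k1 := x.2 (0,0) (by simp)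
  have k2 := x.2 (0,1) (by simp)
  have k3 := x.2 (0,2) (by simp)
  have k4 := x.2 (2,2) (by simp)
  apply Subtype.ext; apply Subtype.ext
  ext i j
  fin_cases i <;> fin_cases j <;>
    simp_all [w1, coe_el, Matrix.vecHead, Matrix.vecTail]

lemma w1_zero : w1 (0 : F) = 0 := by
  apply Subtype.ext; apply Subtype.ext
  ext i j
  fin_cases i <;> fin_cases j <;> simp [w1, coe_el, Matrix.vecHead, Matrix.vecTail]

lemma cls1 (W : Submodule (upperAlg F)ᵐᵒᵖ ↥(N1 (F := F))) : W = ⊥ ∨ W = ⊤ := by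
  rcases eq_or_ne W ⊥ with h | h
  · exact Or.inl h
  right
  obtain ⟨x, hxW, hx0⟩ := Submodule.exists_mem_ne_zero_of_ne_bot h
  obtain ⟨d, rfl⟩ := nf1 x
  have hd : d ≠ 0 := fun hh => hx0 (by rw [hh, w1_zero])
  rw [eq_top_iff]
  rintro y -
  obtain ⟨d', rfl⟩ := nf1 y
  have h2 := W.smul_mem (MulOpposite.op (el 0 0 0 (d'/d) 0)) hxW
  have he : MulOpposite.op (el (0:F) 0 0 (d'/d) 0) • w1 d = w1 d' := by
    apply Subtype.ext; apply Subtype.ext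
    show ((w1 d : upperAlg F) * el 0 0 0 (d'/d) 0 : upperAlg F).1 = _
    ext i j
    rw [mul_entry]
    fin_cases i <;> fin_cases j <;>
      · simp [w1, coe_el, Fin.sum_univ_three, Matrix.vecHead, Matrix.vecTail]
        try field_simp
  rwa [he] at h2

def w2 (e : F) : ↥(N2 (F := F)) :=
  ⟨el 0 0 0 0 e, by intro p hp; fin_cases hp <;> simp [coe_el, Matrix.vecHead, Matrix.vecTail]⟩

lemma nf2 (x : ↥(N2 (F := F))) : ∃ e, x = w2 e := by
  refine ⟨((x : upperAlg F) : Matrix (Fin 3) (Fin 3) F) 2 2, ?_⟩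
  obtain ⟨h1, h2, h3, h4⟩ := (x : upperAlg F).2
  have k1 := x.2 (0,0) (by simp)
  have k2 := x.2 (0,1) (by simp)
  have k3 := x.2 (0,2) (by simp)
  have k4 := x.2 (1,1) (by simp)
  apply Subtype.ext; apply Subtype.ext
  ext i j
  fin_cases i <;> fin_cases j <;>
    simp_all [w2, coe_el, Matrix.vecHead, Matrix.vecTail]

lemma w2_zero : w2 (0 : F) = 0 := by
  apply Subtype.ext; apply Subtype.ext
  ext i j
  fin_cases i <;> fin_cases j <;> simp [w2, coe_el, Matrix.vecHead, Matrix.vecTail]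

lemma cls2 (W : Submodule (upperAlg F)ᵐᵒᵖ ↥(N2 (F := F))) : W = ⊥ ∨ W = ⊤ := by
  rcases eq_or_ne W ⊥ with h | h
  · exact Or.inl h
  right
  obtain ⟨x, hxW, hx0⟩ := Submodule.exists_mem_ne_zero_of_ne_bot h
  obtain ⟨d, rfl⟩ := nf2 x
  have hd : d ≠ 0 := fun hh => hx0 (by rw [hh, w2_zero])
  rw [eq_top_iff]
  rintro y -
  obtain ⟨d', rfl⟩ := nf2 y
  have h2 := W.smul_mem (MulOpposite.op (el 0 0 0 0 (d'/d))) hxW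
  have he : MulOpposite.op (el (0:F) 0 0 0 (d'/d)) • w2 d = w2 d' := by
    apply Subtype.ext; apply Subtype.ext
    show ((w2 d : upperAlg F) * el 0 0 0 0 (d'/d) : upperAlg F).1 = _
    ext i j
    rw [mul_entry]
    fin_cases i <;> fin_cases j <;>
      · simp [w2, coe_el, Fin.sum_univ_three, Matrix.vecHead, Matrix.vecTail]
        try field_simp
  rwa [he] at h2


lemma exists_decomp (x : upperAlg F) :
    ∃ p q r, p ∈ N0 (F := F) ∧ q ∈ N1 ∧ r ∈ N2 ∧ x = p + q + r := by
  obtain ⟨h1, h2, h3, h4⟩ := x.2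
  refine ⟨el ((x : Matrix (Fin 3) (Fin 3) F) 0 0) ((x : Matrix (Fin 3) (Fin 3) F) 0 1)
      ((x : Matrix (Fin 3) (Fin 3) F) 0 2) 0 0,
    el 0 0 0 ((x : Matrix (Fin 3) (Fin 3) F) 1 1) 0,
    el 0 0 0 0 ((x : Matrix (Fin 3) (Fin 3) F) 2 2), ?_, ?_, ?_, ?_⟩
  · intro p hp; fin_cases hp <;> simp [coe_el, Matrix.vecHead, Matrix.vecTail]
  · intro p hp; fin_cases hp <;> simp [coe_el, Matrix.vecHead, Matrix.vecTail]
  · intro p hp; fin_cases hp <;> simp [coe_el, Matrix.vecHead, Matrix.vecTail]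
  · apply Subtype.ext
    ext i j
    fin_cases i <;> fin_cases j <;>
      simp_all [coe_el, Matrix.vecHead, Matrix.vecTail]

lemma sup_top : iSup ![N0 (F := F), N1, N2] = ⊤ := by
  rw [eq_top_iff]
  rintro x -
  obtain ⟨p, q, r, hp, hq, hr, rfl⟩ := exists_decomp x
  exact add_mem (add_mem (Submodule.mem_iSup_of_mem 0 hp) (Submodule.mem_iSup_of_mem 1 hq))
    (Submodule.mem_iSup_of_mem 2 hr)

lemma disj0 : Disjoint (N0 (F := F)) K0 := by
  rw [Submodule.disjoint_def]
  intro x hx hk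
  obtain ⟨h1, h2, h3, h4⟩ := x.2
  have k1 := hx (1,1) (by simp)
  have k2 := hx (2,2) (by simp)
  have l1 := hk (0,0) (by simp)
  have l2 := hk (0,1) (by simp)
  have l3 := hk (0,2) (by simp)
  apply Subtype.ext
  ext i j
  fin_cases i <;> fin_cases j <;> simp_all

lemma disj1 : Disjoint (N1 (F := F)) K1 := by
  rw [Submodule.disjoint_def]
  intro x hx hk
  obtain ⟨h1, h2, h3, h4⟩ := x.2
  have k1 := hx (0,0) (by simp)
  have k2 := hx (0,1) (by simp)
  have k3 := hx (0,2) (by simp)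
  have k4 := hx (2,2) (by simp)
  have l1 := hk (1,1) (by simp)
  apply Subtype.ext
  ext i j
  fin_cases i <;> fin_cases j <;> simp_all

lemma disj2 : Disjoint (N2 (F := F)) K2 := by
  rw [Submodule.disjoint_def]
  intro x hx hk
  obtain ⟨h1, h2, h3, h4⟩ := x.2
  have k1 := hx (0,0) (by simp)
  have k2 := hx (0,1) (by simp)
  have k3 := hx (0,2) (by simp)
  have k4 := hx (1,1) (by simp)
  have l1 := hk (2,2) (by simp)
  apply Subtype.ext
  ext i j
  fin_cases i <;> fin_cases j <;> simp_all

lemma indep : iSupIndep ![N0 (F := F), N1, N2] := by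
  intro i
  fin_cases i
  · refine disj0.mono_right (iSup_le fun j => iSup_le fun hj => ?_)
    fin_cases j
    · exact absurd rfl hj
    · exact le_trans (le_of_eq rfl) (show N1 (F := F) ≤ K0 from eS_le_eS (by decide))
    · exact le_trans (le_of_eq rfl) (show N2 (F := F) ≤ K0 from eS_le_eS (by decide))
  · refine disj1.mono_right (iSup_le fun j => iSup_le fun hj => ?_)
    fin_cases j
    · exact le_trans (le_of_eq rfl) (show N0 (F := F) ≤ K1 from eS_le_eS (by decide))
    · exact absurd rfl hj
    · exact le_trans (le_of_eq rfl) (show N2 (F := F) ≤ K1 from eS_le_eS (by decide))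
  · refine disj2.mono_right (iSup_le fun j => iSup_le fun hj => ?_)
    fin_cases j
    · exact le_trans (le_of_eq rfl) (show N0 (F := F) ≤ K2 from eS_le_eS (by decide))
    · exact le_trans (le_of_eq rfl) (show N1 (F := F) ≤ K2 from eS_le_eS (by decide))
    · exact absurd rfl hj

theorem semidistrib : IsRightSemidistributiveRing (upperAlg F) := by
  refine ⟨Fin 3, ![N0, N1, N2], indep, sup_top, ?_⟩
  intro i
  fin_cases i
  · exact distribN0
  · exact distrib_of_cls cls1
  · exact distrib_of_cls cls2

theorem not_serial : ¬ IsRightSerialRing (upperAlg F) := by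
  rintro ⟨ι, N, -, hsup, huni⟩
  have h1 : ∃ i, ¬ N i ≤ K00 := by
    by_contra h
    push_neg at h
    have hle : (⊤ : Submodule (upperAlg F)ᵐᵒᵖ (upperAlg F)) ≤ K00 := hsup ▸ iSup_le h
    have h0 := hle (Submodule.mem_top (x := (1 : upperAlg F)))
    have h00 := h0 (0,0) (by simp)
    rw [show ((1 : upperAlg F) : Matrix (Fin 3) (Fin 3) F) = 1 from rfl,
      Matrix.one_apply_eq] at h00
    exact one_ne_zero h00
  obtain ⟨i, hi⟩ := h1
  obtain ⟨x, hxN, hxK⟩ := SetLike.not_le_iff_exists.1 hi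
  have hx00 : (x : Matrix (Fin 3) (Fin 3) F) 0 0 ≠ 0 := by
    intro h
    exact hxK (fun p hp => by fin_cases hp; exact h)
  have key : ∀ (m : upperAlg F) (W : Submodule (upperAlg F)ᵐᵒᵖ (upperAlg F)),
      (MulOpposite.op m • (⟨x, hxN⟩ : ↥(N i))) ∈ W.comap (N i).subtype ↔ (x * m) ∈ W := by
    intro m W
    simp only [Submodule.mem_comap, map_smul]
    exact Iff.rfl
  obtain ⟨hx1, hx2, hx3, hx4⟩ := x.2
  have hp1 : (MulOpposite.op (el (0:F) 1 0 0 0) • (⟨x, hxN⟩ : ↥(N i)))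
      ∈ (I1 (F := F)).comap (N i).subtype := by
    rw [key]
    intro p hp
    rw [mul_entry]
    fin_cases hp <;>
      simp_all [coe_el, Fin.sum_univ_three, Matrix.vecHead, Matrix.vecTail]
  have hp2 : (MulOpposite.op (el (0:F) 0 1 0 0) • (⟨x, hxN⟩ : ↥(N i)))
      ∈ (I2 (F := F)).comap (N i).subtype := by
    rw [key]
    intro p hp
    rw [mul_entry]
    fin_cases hp <;>
      simp_all [coe_el, Fin.sum_univ_three, Matrix.vecHead, Matrix.vecTail]
  rcases huni i ((I1 (F := F)).comap (N i).subtype) ((I2 (F := F)).comap (N i).subtype)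
    with h | h
  · have h2 := (key _ _).1 (h hp1)
    have h01 := h2 (0,1) (by simp)
    rw [mul_entry] at h01
    simp [coe_el, Fin.sum_univ_three, Matrix.vecHead, Matrix.vecTail] at h01
    simp_all
  · have h2 := (key _ _).1 (h hp2)
    have h02 := h2 (0,2) (by simp)
    rw [mul_entry] at h02
    simp [coe_el, Fin.sum_univ_three, Matrix.vecHead, Matrix.vecTail] at h02
    simp_all

end UA

set_option synthInstance.maxHeartbeats 1000000 in
/-- Let `F` be a field and let `A` be the `5`-dimensional `F`-algebra of all `3 × 3`
matrices over `F` that vanish at the entries `(2,1), (2,3), (3,1), (3,2)`.  Then `A` is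
an Artinian (on both sides) right semidistributive ring which is not right serial. -/
theorem stmt19 (F : Type*) [Field F] :
    IsArtinian (upperAlg F) (upperAlg F) ∧
      IsArtinian (upperAlg F)ᵐᵒᵖ (upperAlg F) ∧
      IsRightSemidistributiveRing (upperAlg F) ∧
      ¬ IsRightSerialRing (upperAlg F) := by
  exact ⟨isArtinian_of_tower F inferInstance, isArtinian_of_tower F inferInstance,
    UA.semidistrib, UA.not_serial⟩
end
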